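/- arXiv:2304.01278 — 4 statements merged into one kernel-verified Lean document; each statement's English description precedes it below -/
import Mathlib

section
/- For every nondeterministic Büchi automaton A over a finite alphabet Σ, the set of Parikh images Ψ(J(A)) = {Ψ(w) : w ∈ J(A)} ⊆ 𝕄^Σ of its jumping language is a masked semilinear set. -/
open scoped Classical

/-- A (nondeterministic) Büchi automaton over alphabet `A`, with a finite state set. -/
structure BuchiAutomaton (A : Type) : Type 1 where
  Q : Type
  fin : Fintype Q
  step : Q → A → Set Q
  init : Set Q
  accept : Set Q

attribute [instance] BuchiAutomaton.fin

/-- A run of the automaton on an infinite word. -/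
def BuchiAutomaton.IsRun {A : Type} (M : BuchiAutomaton A) (w : ℕ → A) (ρ : ℕ → M.Q) : Prop :=
  ρ 0 ∈ M.init ∧ ∀ i, ρ (i + 1) ∈ M.step (ρ i) (w i)

/-- The language of a Büchi automaton: words admitting a run visiting the accepting set
infinitely often. -/
def BuchiAutomaton.lang {A : Type} (M : BuchiAutomaton A) : Set (ℕ → A) :=
  {w | ∃ ρ, M.IsRun w ρ ∧ ∀ n, ∃ m, n ≤ m ∧ ρ m ∈ M.accept}

/-- A Büchi automaton is deterministic if it has a unique initial state and
every transition set is a singleton. -/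
def BuchiAutomaton.Deterministic {A : Type} (M : BuchiAutomaton A) : Prop :=
  (∃ q, M.init = {q}) ∧ ∀ q a, ∃ p, M.step q a = {p}

/-- Parikh image of an infinite word: number of occurrences of each letter (`⊤` if infinite). -/
noncomputable def parikhInf {A : Type} (w : ℕ → A) : A → ℕ∞ :=
  fun a => {i : ℕ | w i = a}.encard

/-- The jumping language of a Büchi automaton. -/
def JumpLang {A : Type} (M : BuchiAutomaton A) : Set (ℕ → A) :=
  {w | ∃ w', parikhInf w' = parikhInf w ∧ w' ∈ M.lang}

/-- Number of occurrences of letter `a` in the `i`-th window of size `k` of `w`. -/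
noncomputable def winCount {A : Type} (w : ℕ → A) (k i : ℕ) (a : A) : ℕ :=
  {j : ℕ | k * i ≤ j ∧ j < k * i + k ∧ w j = a}.ncard

/-- `w` and `w'` are `k`-window permutations of each other. -/
def KWinPerm {A : Type} (k : ℕ) (w w' : ℕ → A) : Prop :=
  ∀ i a, winCount w k i a = winCount w' k i a

/-- The `k`-window jumping language of a Büchi automaton. -/
def KWinLang {A : Type} (M : BuchiAutomaton A) (k : ℕ) : Set (ℕ → A) :=
  {w | ∃ w', KWinPerm k w' w ∧ w' ∈ M.lang}

/-- The `∃`-window jumping language of a Büchi automaton. -/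
def EWinLang {A : Type} (M : BuchiAutomaton A) : Set (ℕ → A) :=
  {w | ∃ k, 1 ≤ k ∧ ∃ w', KWinPerm k w' w ∧ w' ∈ M.lang}

/-- Linear subsets of `ℕ^A`. -/
def IsLinearSet' {A : Type} (R : Set (A → ℕ)) : Prop :=
  ∃ (b : A → ℕ) (P : Finset (A → ℕ)),
    R = {v | ∃ c : (A → ℕ) → ℕ, v = b + ∑ p ∈ P, c p • p}

/-- Semilinear sets: finite unions of linear sets. -/
def IsSemilinearSet' {A : Type} (R : Set (A → ℕ)) : Prop :=
  ∃ (n : ℕ) (f : Fin n → Set (A → ℕ)), (∀ i, IsLinearSet' (f i)) ∧ R = ⋃ i, f i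

/-- A mask: a vector over `{0,∞}` with at least one `∞` coordinate. -/
def IsMask {A : Type} (m : A → ℕ∞) : Prop :=
  (∀ a, m a = 0 ∨ m a = ⊤) ∧ ∃ a, m a = ⊤

/-- Adding a mask to a vector of naturals. -/
def maskAdd {A : Type} (x : A → ℕ) (m : A → ℕ∞) : A → ℕ∞ :=
  fun a => (x a : ℕ∞) + m a

/-- Adding a mask to a set of vectors, `R + m`. -/
def maskAddSet {A : Type} (R : Set (A → ℕ)) (m : A → ℕ∞) : Set (A → ℕ∞) :=
  (fun x => maskAdd x m) '' R

/-- `𝕄^A`: extended-natural vectors with at least one `∞` coordinate. -/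
def MVecs (A : Type) : Set (A → ℕ∞) := {v | ∃ a, v a = ⊤}

/-- Masked semilinear set: a union `⋃_m (S_m + m)` over all masks `m`, with each `S_m`
semilinear. -/
def IsMaskedSemilinear {A : Type} (S : Set (A → ℕ∞)) : Prop :=
  ∃ F : (A → ℕ∞) → Set (A → ℕ),
    (∀ m, IsMask m → IsSemilinearSet' (F m)) ∧
    S = ⋃ m ∈ {m' : A → ℕ∞ | IsMask m'}, maskAddSet (F m) m

/-- `R` is `m`-oblivious: membership only depends on the `m`-equivalence class. -/
def MOblivious {A : Type} (m : A → ℕ∞) (R : Set (A → ℕ)) : Prop :=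
  ∀ u v : A → ℕ, maskAdd u m = maskAdd v m → (u ∈ R ↔ v ∈ R)

/-- `E_m`: unit vectors at the `∞` coordinates of the mask `m`. -/
noncomputable def maskUnits {A : Type} [Fintype A] [DecidableEq A] (m : A → ℕ∞) :
    Finset (A → ℕ) :=
  (Finset.univ.filter (fun a => m a = ⊤)).image (fun a => Pi.single a 1)

/-- `R` is in canonical `m`-oblivious form. -/
def CanonicalOblivious {A : Type} [Fintype A] [DecidableEq A] (m : A → ℕ∞)
    (R : Set (A → ℕ)) : Prop :=
  ∃ (n : ℕ) (b : Fin n → (A → ℕ)) (P : Fin n → Finset (A → ℕ)),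
    (∀ i a, m a = ⊤ → b i a = 0) ∧
    (∀ i p, p ∈ P i → ∀ a, m a = ⊤ → p a = 0) ∧
    R = ⋃ i, {v | ∃ c : (A → ℕ) → ℕ, v = b i + ∑ p ∈ (P i ∪ maskUnits m), c p • p}

open scoped Pointwise
set_option linter.unusedSectionVars false
set_option maxHeartbeats 1000000

namespace SLAux

variable {A : Type}


lemma linSet_eq (b : A → ℕ) (P : Finset (A → ℕ)) :
    {v | ∃ c : (A → ℕ) → ℕ, v = b + ∑ p ∈ P, c p • p}
      = (b + ·) '' (AddSubmonoid.closure (↑P : Set (A → ℕ)) : Set (A → ℕ)) := by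
  ext v
  constructor
  · rintro ⟨c, rfl⟩
    exact ⟨∑ p ∈ P, c p • p,
      AddSubmonoid.sum_mem _ (fun p hp =>
        AddSubmonoid.nsmul_mem _ (AddSubmonoid.subset_closure hp) _), rfl⟩
  · rintro ⟨s, hs, rfl⟩
    suffices h : ∃ c : (A → ℕ) → ℕ, s = ∑ p ∈ P, c p • p by
      obtain ⟨c, hc⟩ := h; exact ⟨c, by rw [hc]⟩
    induction hs using AddSubmonoid.closure_induction with
    | mem x hx =>
      refine ⟨fun y => if y = x then 1 else 0, ?_⟩
      have : ∀ p ∈ P, (if p = x then 1 else 0 : ℕ) • p = if p = x then p else 0 := by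
        intro p hp; by_cases h : p = x <;> simp [h]
      rw [Finset.sum_congr rfl this, Finset.sum_ite_eq' P x (fun y => y),
        if_pos (Finset.mem_coe.mp hx)]
    | zero => exact ⟨0, by simp⟩
    | add x y hx hy ihx ihy =>
      obtain ⟨c₁, h₁⟩ := ihx; obtain ⟨c₂, h₂⟩ := ihy
      exact ⟨c₁ + c₂, by simp [h₁, h₂, add_smul, Finset.sum_add_distrib]⟩

lemma isLinearSet_iff {R : Set (A → ℕ)} :
    IsLinearSet' R ↔ ∃ (b : A → ℕ) (P : Finset (A → ℕ)),
      R = (b + ·) '' (AddSubmonoid.closure (↑P : Set (A → ℕ)) : Set (A → ℕ)) := by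
  constructor
  · rintro ⟨b, P, rfl⟩; exact ⟨b, P, linSet_eq b P⟩
  · rintro ⟨b, P, rfl⟩; exact ⟨b, P, (linSet_eq b P).symm⟩

lemma isLinearSet_singleton (b : A → ℕ) : IsLinearSet' {b} := by
  refine ⟨b, ∅, ?_⟩
  ext v; simp [eq_comm]

lemma linear_isSemilinear {R : Set (A → ℕ)} (h : IsLinearSet' R) :
    IsSemilinearSet' R := ⟨1, fun _ => R, fun _ => h, (Set.iUnion_const R).symm⟩

lemma isSemilinearSet_empty : IsSemilinearSet' (∅ : Set (A → ℕ)) :=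
  ⟨0, fun i => i.elim0, fun i => i.elim0, by simp⟩

lemma semilinear_union {R T : Set (A → ℕ)} (hR : IsSemilinearSet' R)
    (hT : IsSemilinearSet' T) : IsSemilinearSet' (R ∪ T) := by
  obtain ⟨n, f, hf, rfl⟩ := hR
  obtain ⟨m, g, hg, rfl⟩ := hT
  refine ⟨n + m, fun i => Fin.addCases f g i, fun i => ?_, ?_⟩
  · exact Fin.addCases (fun i => by simpa using hf i) (fun i => by simpa using hg i) i
  · ext x
    simp only [Set.mem_union, Set.mem_iUnion]
    constructor
    · rintro (⟨i, hi⟩ | ⟨i, hi⟩)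
      · exact ⟨Fin.castAdd m i, by simpa using hi⟩
      · exact ⟨Fin.natAdd n i, by simpa using hi⟩
    · rintro ⟨i, hi⟩
      refine Fin.addCases (fun j hj => Or.inl ⟨j, by simpa using hj⟩)
        (fun j hj => Or.inr ⟨j, by simpa using hj⟩) i hi

lemma isSemilinearSet_biUnion {ι : Type*} (s : Finset ι) {f : ι → Set (A → ℕ)}
    (hf : ∀ i ∈ s, IsSemilinearSet' (f i)) : IsSemilinearSet' (⋃ i ∈ s, f i) := by
  classical
  induction s using Finset.induction_on with
  | empty => simpa using isSemilinearSet_empty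
  | @insert a s ha ih =>
    rw [Finset.set_biUnion_insert]
    exact semilinear_union (hf a (Finset.mem_insert_self _ _))
      (ih fun i hi => hf i (Finset.mem_insert_of_mem hi))

lemma coe_closure_union (S T : Set (A → ℕ)) :
    (AddSubmonoid.closure (S ∪ T) : Set (A → ℕ))
      = (AddSubmonoid.closure S : Set (A → ℕ)) + (AddSubmonoid.closure T : Set (A → ℕ)) := by
  ext x
  rw [Set.mem_add]
  simp only [SetLike.mem_coe, AddSubmonoid.closure_union, AddSubmonoid.mem_sup]

lemma image_add_add (b c : A → ℕ) (S T : Set (A → ℕ)) :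
    ((b + ·) '' S) + ((c + ·) '' T) = ((b + c) + ·) '' (S + T) := by
  ext x
  constructor
  · rw [Set.mem_add]
    rintro ⟨y, ⟨s, hs, rfl⟩, z, ⟨t, ht, rfl⟩, rfl⟩
    exact ⟨s + t, Set.add_mem_add hs ht, by funext a; simp only [Pi.add_apply]; ring⟩
  · rintro ⟨u, hu, rfl⟩
    rw [Set.mem_add] at hu
    obtain ⟨s, hs, t, ht, rfl⟩ := hu
    rw [Set.mem_add]
    exact ⟨b + s, ⟨s, hs, rfl⟩, c + t, ⟨t, ht, rfl⟩, by abel⟩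

lemma linear_add {R T : Set (A → ℕ)} (hR : IsLinearSet' R) (hT : IsLinearSet' T) :
    IsLinearSet' (R + T) := by
  classical
  rw [isLinearSet_iff] at *
  obtain ⟨b₁, P₁, rfl⟩ := hR
  obtain ⟨b₂, P₂, rfl⟩ := hT
  refine ⟨b₁ + b₂, P₁ ∪ P₂, ?_⟩
  rw [image_add_add, ← coe_closure_union, ← Finset.coe_union]

lemma isSemilinearSet_iUnion {ι : Type} [Fintype ι] {f : ι → Set (A → ℕ)}
    (hf : ∀ i, IsSemilinearSet' (f i)) : IsSemilinearSet' (⋃ i, f i) := by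
  have := isSemilinearSet_biUnion (Finset.univ : Finset ι) (fun i _ => hf i)
  simpa using this

lemma semilinear_add {R T : Set (A → ℕ)} (hR : IsSemilinearSet' R)
    (hT : IsSemilinearSet' T) : IsSemilinearSet' (R + T) := by
  obtain ⟨n, f, hf, rfl⟩ := hR
  obtain ⟨m, g, hg, rfl⟩ := hT
  rw [Set.iUnion_add]
  refine isSemilinearSet_iUnion (fun i => ?_)
  rw [Set.add_iUnion]
  exact isSemilinearSet_iUnion (fun j => linear_isSemilinear (linear_add (hf i) (hg j)))

lemma star_linear {L : Set (A → ℕ)} (hL : IsLinearSet' L) :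
    IsSemilinearSet' ((AddSubmonoid.closure L : AddSubmonoid (A → ℕ)) : Set (A → ℕ)) := by
  classical
  rw [isLinearSet_iff] at hL
  obtain ⟨b, P, rfl⟩ := hL
  have key : ((AddSubmonoid.closure ((b + ·) '' ↑(AddSubmonoid.closure (↑P : Set (A → ℕ))))
        : AddSubmonoid (A → ℕ)) : Set (A → ℕ))
      = {0} ∪ ((b + ·) '' ↑(AddSubmonoid.closure (insert b ↑P : Set (A → ℕ)))) := by
    ext x
    constructor
    · intro hx
      induction hx using AddSubmonoid.closure_induction with
      | mem y hy =>
        obtain ⟨s, hs, rfl⟩ := hy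
        exact Or.inr ⟨s, AddSubmonoid.closure_mono (Set.subset_insert b ↑P) hs, rfl⟩
      | zero => exact Or.inl rfl
      | add x y hx hy ihx ihy =>
        rcases ihx with rfl | ⟨s, hs, rfl⟩
        · simpa using ihy
        · rcases ihy with rfl | ⟨t, ht, rfl⟩
          · exact Or.inr ⟨s, hs, by abel⟩
          · refine Or.inr ⟨s + (b + t), ?_, by funext a; simp only [Pi.add_apply]; ring⟩
            exact add_mem hs (add_mem
              (AddSubmonoid.subset_closure (Set.mem_insert b ↑P)) ht)
    · rintro (rfl | ⟨t, ht, rfl⟩)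
      · exact zero_mem _
      · rw [SetLike.mem_coe, Set.insert_eq, AddSubmonoid.closure_union,
          AddSubmonoid.mem_sup] at ht
        obtain ⟨y, hy, z, hz, rfl⟩ := ht
        obtain ⟨k, rfl⟩ := AddSubmonoid.mem_closure_singleton.mp hy
        have hb : b ∈ AddSubmonoid.closure ((b + ·) '' ↑(AddSubmonoid.closure (↑P : Set (A → ℕ)))) :=
          AddSubmonoid.subset_closure ⟨0, zero_mem _, add_zero b⟩
        have hbz : b + z ∈ AddSubmonoid.closure
            ((b + ·) '' ↑(AddSubmonoid.closure (↑P : Set (A → ℕ)))) :=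
          AddSubmonoid.subset_closure ⟨z, hz, rfl⟩
        have : b + (k • b + z) = (b + z) + k • b := by abel
        rw [SetLike.mem_coe]
        show b + (k • b + z) ∈ _
        rw [this]
        exact add_mem hbz (AddSubmonoid.nsmul_mem _ hb k)
  rw [key]
  refine semilinear_union (linear_isSemilinear (isLinearSet_singleton 0)) ?_
  refine linear_isSemilinear (isLinearSet_iff.mpr ⟨b, insert b P, ?_⟩)
  rw [Finset.coe_insert]

lemma semilinear_closure {R : Set (A → ℕ)} (hR : IsSemilinearSet' R) :
    IsSemilinearSet' ((AddSubmonoid.closure R : AddSubmonoid (A → ℕ)) : Set (A → ℕ)) := by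
  obtain ⟨n, f, hf, rfl⟩ := hR
  induction n with
  | zero =>
    have : (⋃ i : Fin 0, f i) = (∅ : Set (A → ℕ)) := by simp
    rw [this, AddSubmonoid.closure_empty, AddSubmonoid.coe_bot]
    exact linear_isSemilinear (isLinearSet_singleton 0)
  | succ n ih =>
    have : (⋃ i : Fin (n + 1), f i) = f 0 ∪ ⋃ i : Fin n, f i.succ := by
      ext x; simp [Fin.exists_fin_succ]
    rw [this, coe_closure_union]
    exact semilinear_add (star_linear (hf 0)) (ih _ (fun i => hf i.succ))



/-- Parikh image of a finite word. -/
noncomputable def ψ (l : List A) : A → ℕ := fun a => l.count a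

lemma ψ_nil : ψ ([] : List A) = 0 := by funext a; simp [ψ]

lemma ψ_append (l₁ l₂ : List A) : ψ (l₁ ++ l₂) = ψ l₁ + ψ l₂ := by
  funext a; simp [ψ, List.count_append]

lemma ψ_single (a : A) : ψ [a] = Pi.single a 1 := by
  funext b
  by_cases h : b = a <;> simp [ψ, List.count_singleton', Pi.single_apply, h, eq_comm]
  exact Ne.symm h

variable (M : BuchiAutomaton A)

/-- Walks from `p` to `q` with all intermediate states in `S`. -/
inductive Walk : Set M.Q → M.Q → M.Q → List A → Prop where
  | nil (S p) : Walk S p p []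
  | single {S p a q} : q ∈ M.step p a → Walk S p q [a]
  | cons {S p a r q l} : r ∈ M.step p a → r ∈ S → Walk S r q l → Walk S p q (a :: l)

variable {M}

lemma Walk.mono {S T : Set M.Q} (hST : S ⊆ T) {p q l} (h : Walk M S p q l) :
    Walk M T p q l := by
  induction h with
  | nil p => exact Walk.nil T p
  | single h => exact Walk.single h
  | cons h hS _ ih => exact Walk.cons h (hST hS) ih

lemma Walk.append {S : Set M.Q} {p r q l₁ l₂} (h₁ : Walk M S p r l₁) (hr : r ∈ S)
    (h₂ : Walk M S r q l₂) : Walk M S p q (l₁ ++ l₂) := by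
  induction h₁ with
  | nil => simpa using h₂
  | single h => exact Walk.cons h hr h₂
  | cons h hS _ ih => exact Walk.cons h hS (ih hr h₂)

variable (M) in
/-- Kleene star of loops at `r` with intermediate states in `S`. -/
inductive LoopStar (S : Set M.Q) (r : M.Q) : List A → Prop where
  | nil : LoopStar S r []
  | cons {m l} : Walk M S r r m → LoopStar S r l → LoopStar S r (m ++ l)

lemma LoopStar.one {S : Set M.Q} {r m} (h : Walk M S r r m) : LoopStar M S r m := by
  have := LoopStar.cons h (LoopStar.nil (M := M) (S := S) (r := r))
  simpa using this

lemma LoopStar.append {S : Set M.Q} {r l₁ l₂} (h₁ : LoopStar M S r l₁)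
    (h₂ : LoopStar M S r l₂) : LoopStar M S r (l₁ ++ l₂) := by
  induction h₁ with
  | nil => simpa using h₂
  | cons hw _ ih => rename_i m l; rw [List.append_assoc]; exact LoopStar.cons hw ih

lemma LoopStar.toWalk {S : Set M.Q} {r l} (h : LoopStar M S r l) :
    Walk M (insert r S) r r l := by
  induction h with
  | nil => exact Walk.nil _ _
  | cons hw _ ih =>
    exact Walk.append (hw.mono (Set.subset_insert r S)) (Set.mem_insert r S) ih

/-- Kleene decomposition. -/
lemma walk_insert_decomp {S : Set M.Q} {r p q l} (h : Walk M (insert r S) p q l) :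
    Walk M S p q l ∨ ∃ l₁ l₂ l₃, l = l₁ ++ l₂ ++ l₃ ∧ Walk M S p r l₁ ∧
      LoopStar M S r l₂ ∧ Walk M S r q l₃ := by
  induction h with
  | nil p => exact Or.inl (Walk.nil _ _)
  | single h => exact Or.inl (Walk.single h)
  | cons h hS hw ih =>
    rename_i p a s q l
    rcases ih with hw' | ⟨l₁, l₂, l₃, rfl, h₁, h₂, h₃⟩
    · rcases hS with rfl | hS
      · exact Or.inr ⟨[a], [], l, rfl, Walk.single h, LoopStar.nil, hw'⟩
      · exact Or.inl (Walk.cons h hS hw')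
    · rcases hS with rfl | hS
      · refine Or.inr ⟨[a], l₁ ++ l₂, l₃, by simp, Walk.single h,
          (LoopStar.one h₁).append h₂, h₃⟩
      · exact Or.inr ⟨a :: l₁, l₂, l₃, by simp, Walk.cons h hS h₁, h₂, h₃⟩

lemma walk_insert_comp {S : Set M.Q} {r p q l₁ l₂ l₃} (h₁ : Walk M S p r l₁)
    (h₂ : LoopStar M S r l₂) (h₃ : Walk M S r q l₃) :
    Walk M (insert r S) p q (l₁ ++ l₂ ++ l₃) :=
  Walk.append (Walk.append (h₁.mono (Set.subset_insert r S)) (Set.mem_insert r S)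
    h₂.toWalk) (Set.mem_insert r S) (h₃.mono (Set.subset_insert r S))

lemma walk_empty_iff {p q : M.Q} {l : List A} :
    Walk M ∅ p q l ↔ (p = q ∧ l = []) ∨ ∃ a, q ∈ M.step p a ∧ l = [a] := by
  constructor
  · intro h
    cases h with
    | nil => exact Or.inl ⟨rfl, rfl⟩
    | single h => exact Or.inr ⟨_, h, rfl⟩
    | cons h hS _ => exact absurd hS (Set.notMem_empty _)
  · rintro (⟨rfl, rfl⟩ | ⟨a, h, rfl⟩)
    · exact Walk.nil _ _
    · exact Walk.single h

lemma loopStar_parikh_mem_closure {S : Set M.Q} {r l} (h : LoopStar M S r l) :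
    ψ l ∈ AddSubmonoid.closure (ψ '' {m | Walk M S r r m}) := by
  induction h with
  | nil => rw [ψ_nil]; exact zero_mem _
  | cons hw _ ih =>
    rw [ψ_append]
    exact add_mem (AddSubmonoid.subset_closure ⟨_, hw, rfl⟩) ih

lemma mem_closure_parikh_loopStar {S : Set M.Q} {r} {c : A → ℕ}
    (hc : c ∈ AddSubmonoid.closure (ψ '' {m | Walk M S r r m})) :
    ∃ l, LoopStar M S r l ∧ ψ l = c := by
  induction hc using AddSubmonoid.closure_induction with
  | mem x hx => obtain ⟨m, hm, rfl⟩ := hx; exact ⟨m, LoopStar.one hm, rfl⟩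
  | zero => exact ⟨[], LoopStar.nil, ψ_nil⟩
  | add x y hx hy ihx ihy =>
    obtain ⟨l₁, h₁, rfl⟩ := ihx
    obtain ⟨l₂, h₂, rfl⟩ := ihy
    exact ⟨l₁ ++ l₂, h₁.append h₂, ψ_append l₁ l₂⟩

variable [Fintype A]

lemma walkParikh_semilinear (S : Finset M.Q) (p q : M.Q) :
    IsSemilinearSet' (ψ '' {l | Walk M ↑S p q l}) := by
  induction S using Finset.induction_on generalizing p q with
  | empty =>
    have : ψ '' {l | Walk M (↑(∅ : Finset M.Q)) p q l}
        = (if p = q then {(0 : A → ℕ)} else ∅) ∪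
          ⋃ a : A, (if q ∈ M.step p a then {Pi.single a 1} else ∅) := by
      ext v
      simp only [Finset.coe_empty, Set.mem_image, Set.mem_setOf_eq, walk_empty_iff,
        Set.mem_union, Set.mem_iUnion]
      constructor
      · rintro ⟨l, (⟨rfl, rfl⟩ | ⟨a, ha, rfl⟩), rfl⟩
        · exact Or.inl (by simp [ψ_nil])
        · exact Or.inr ⟨a, by simp [ha, ψ_single]⟩
      · rintro (hv | ⟨a, hv⟩)
        · rcases Classical.em (p = q) with rfl | hpq
          · rw [if_pos rfl] at hv
            exact ⟨[], Or.inl ⟨rfl, rfl⟩, by rw [ψ_nil, Set.mem_singleton_iff.mp hv]⟩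
          · rw [if_neg hpq] at hv; exact absurd hv (Set.notMem_empty v)
        · rcases Classical.em (q ∈ M.step p a) with hq | hq
          · rw [if_pos hq] at hv
            exact ⟨[a], Or.inr ⟨a, hq, rfl⟩, by rw [ψ_single, Set.mem_singleton_iff.mp hv]⟩
          · rw [if_neg hq] at hv; exact absurd hv (Set.notMem_empty v)
    rw [this]
    refine semilinear_union ?_ (isSemilinearSet_iUnion (fun a => ?_))
    · split
      · exact linear_isSemilinear (isLinearSet_singleton 0)
      · exact isSemilinearSet_empty
    · split
      · exact linear_isSemilinear (isLinearSet_singleton _)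
      · exact isSemilinearSet_empty
  | @insert r S hr ih =>
    have key : ψ '' {l | Walk M (↑(insert r S)) p q l}
        = (ψ '' {l | Walk M ↑S p q l}) ∪
          ((ψ '' {l | Walk M ↑S p r l}) +
            ↑(AddSubmonoid.closure (ψ '' {m | Walk M ↑S r r m})) +
            (ψ '' {l | Walk M ↑S r q l})) := by
      rw [Finset.coe_insert]
      ext v
      constructor
      · rintro ⟨l, hl, rfl⟩
        rcases walk_insert_decomp hl with h | ⟨l₁, l₂, l₃, rfl, h₁, h₂, h₃⟩
        · exact Or.inl ⟨l, h, rfl⟩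
        · refine Or.inr ?_
          rw [Set.mem_add]
          refine ⟨ψ l₁ + ψ l₂, ?_, ψ l₃, ⟨l₃, h₃, rfl⟩, by rw [ψ_append, ψ_append]⟩
          rw [Set.mem_add]
          exact ⟨ψ l₁, ⟨l₁, h₁, rfl⟩, ψ l₂, loopStar_parikh_mem_closure h₂, rfl⟩
      · rintro (⟨l, hl, rfl⟩ | hv)
        · exact ⟨l, hl.mono (Set.subset_insert r ↑S), rfl⟩
        · rw [Set.mem_add] at hv
          obtain ⟨u, hu, z, ⟨l₃, h₃, rfl⟩, rfl⟩ := hv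
          rw [Set.mem_add] at hu
          obtain ⟨x, ⟨l₁, h₁, rfl⟩, c, hc, rfl⟩ := hu
          obtain ⟨l₂, h₂, rfl⟩ := mem_closure_parikh_loopStar hc
          exact ⟨l₁ ++ l₂ ++ l₃, walk_insert_comp h₁ h₂ h₃, by rw [ψ_append, ψ_append]⟩
    rw [key]
    exact semilinear_union (ih p q)
      (semilinear_add (semilinear_add (ih p r) (semilinear_closure (ih r r))) (ih r q))



variable (M : BuchiAutomaton A) in
def FinRun (M : BuchiAutomaton A) : M.Q → List A → M.Q → Prop
  | p, [], q => p = q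
  | p, a :: l, q => ∃ r, r ∈ M.step p a ∧ FinRun M r l q

@[simp] lemma finRun_nil {p q : M.Q} : FinRun M p [] q ↔ p = q := Iff.rfl

@[simp] lemma finRun_cons {p q : M.Q} {a l} :
    FinRun M p (a :: l) q ↔ ∃ r, r ∈ M.step p a ∧ FinRun M r l q := Iff.rfl

lemma FinRun.append {p r q : M.Q} {l₁ l₂} (h₁ : FinRun M p l₁ r) (h₂ : FinRun M r l₂ q) :
    FinRun M p (l₁ ++ l₂) q := by
  induction l₁ generalizing p with
  | nil =>
    rw [finRun_nil] at h₁; subst h₁; simpa using h₂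
  | cons a l ih =>
    obtain ⟨s, hs, h⟩ := h₁
    exact ⟨s, hs, ih h⟩

lemma finRun_ofFn {w : ℕ → A} {ρ : ℕ → M.Q} (h : ∀ i, ρ (i + 1) ∈ M.step (ρ i) (w i))
    (i n : ℕ) : FinRun M (ρ i) (List.ofFn fun k : Fin n => w (i + k)) (ρ (i + n)) := by
  induction n generalizing i with
  | zero => simp
  | succ n ih =>
    rw [List.ofFn_succ]
    refine ⟨ρ (i + 1), by simpa using h i, ?_⟩
    have e1 : (fun k : Fin n => w (i + (k.succ : ℕ))) = fun k : Fin n => w ((i + 1) + k) := by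
      funext k; congr 1; simp [Fin.val_succ]; omega
    have e2 : i + (n + 1) = (i + 1) + n := by omega
    rw [e1, show i + (n+1) = (i+1) + n from e2] at *
    exact ih (i + 1)

/-- Extract a state function from a finite run. -/
lemma finRun_states (d : A) {p q : M.Q} {l : List A} (h : FinRun M p l q) :
    ∃ σ : ℕ → M.Q, σ 0 = p ∧ (∀ i, l.length ≤ i → σ i = q) ∧
      ∀ i < l.length, σ (i + 1) ∈ M.step (σ i) (l.getD i d) := by
  induction l generalizing p with
  | nil =>
    rw [finRun_nil] at h; subst h
    exact ⟨fun _ => p, rfl, fun _ _ => rfl, by simp⟩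
  | cons a l ih =>
    obtain ⟨r, hr, h'⟩ := h
    obtain ⟨σ', h0, hend, htr⟩ := ih h'
    refine ⟨fun i => if i = 0 then p else σ' (i - 1), rfl, ?_, ?_⟩
    · intro i hi
      have : i ≠ 0 := by simp at hi; omega
      simp only [if_neg this]
      exact hend _ (by simp at hi ⊢; omega)
    · intro i hi
      rcases Nat.eq_zero_or_pos i with rfl | hpos
      · simpa [h0] using hr
      · have h1 : i ≠ 0 := by omega
        have h2 : i + 1 ≠ 0 := by omega
        simp only [if_neg h1, if_neg h2]
        have : i - 1 < l.length := by simp at hi; omega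
        have ht := htr (i - 1) this
        have e3 : i - 1 + 1 = i := by omega
        rw [e3] at ht
        have e4 : (a :: l).getD i d = l.getD (i - 1) d := by
          rcases Nat.exists_eq_add_of_lt hpos with ⟨j, hj⟩
          subst hj; simp
        rw [e4]
        exact ht



lemma walk_univ_iff {p q : M.Q} {l : List A} :
    Walk M Set.univ p q l ↔ FinRun M p l q := by
  constructor
  · intro h
    induction h with
    | nil p => rfl
    | single h => exact ⟨_, h, rfl⟩
    | cons h _ _ ih => exact ⟨_, h, ih⟩
  · intro h
    induction l generalizing p with
    | nil => rw [finRun_nil] at h; subst h; exact Walk.nil _ _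
    | cons a l ih =>
      obtain ⟨r, hr, h'⟩ := h
      exact Walk.cons hr (Set.mem_univ r) (ih h')

lemma encard_count (l : List A) (d : A) (a : A) :
    {i : ℕ | i < l.length ∧ l.getD i d = a}.encard = (l.count a : ℕ∞) := by
  induction l with
  | nil => simp
  | cons b l ih =>
    have hset : {i : ℕ | i < (b :: l).length ∧ (b :: l).getD i d = a}
        = (if b = a then {0} else ∅) ∪ (Nat.succ '' {i : ℕ | i < l.length ∧ l.getD i d = a}) := by
      ext i
      rcases i with _ | j
      · by_cases hb : b = a <;> simp [hb]
      · by_cases hb : b = a <;>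
          simp [hb, Nat.succ_eq_add_one, Nat.succ_lt_succ_iff, eq_comm (a := j + 1)]
    rw [hset, Set.encard_union_eq, Nat.succ_injective.encard_image _, ih]
    · have hc : (b :: l).count a = l.count a + (if b = a then 1 else 0) := by
        by_cases hb : b = a <;> simp [List.count_cons, hb]
      rw [hc]
      by_cases hb : b = a
      · rw [if_pos hb, if_pos hb, Set.encard_singleton]
        push_cast
        rw [add_comm]
      · rw [if_neg hb, if_neg hb, Set.encard_empty]
        push_cast
        rw [zero_add, add_zero]
    · by_cases hb : b = a <;> simp [hb, Set.disjoint_left]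

lemma exists_infinite_fiber_on {S : Set ℕ} (hS : S.Infinite) {Q : Type} [Fintype Q]
    (ρ : ℕ → Q) : ∃ q, {i | i ∈ S ∧ ρ i = q}.Infinite := by
  by_contra hcon
  push_neg at hcon
  have : S ⊆ ⋃ q : Q, {i | i ∈ S ∧ ρ i = q} := fun i hi => Set.mem_iUnion.mpr ⟨ρ i, hi, rfl⟩
  exact hS (Set.Finite.subset (Set.finite_iUnion hcon) this)


lemma lasso {q₀ q s : M.Q} {l₀ ℓ₁ ℓ₂ : List A}
    (hinit : q₀ ∈ M.init) (h₀ : FinRun M q₀ l₀ q) (h₁ : FinRun M q ℓ₁ s)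
    (hacc : s ∈ M.accept) (h₂ : FinRun M s ℓ₂ q) (hne : ℓ₁ ++ ℓ₂ ≠ []) :
    ∃ w ∈ M.lang, (∀ a, a ∉ ℓ₁ ++ ℓ₂ → parikhInf w a = (ψ l₀ a : ℕ∞)) ∧
      (∀ a, a ∈ ℓ₁ ++ ℓ₂ → parikhInf w a = ⊤) := by
  set ℓ : List A := ℓ₁ ++ ℓ₂ with hℓ
  have hL : 0 < ℓ.length := List.length_pos_iff.mpr hne
  set L : ℕ := ℓ.length with hLdef
  set d : A := ℓ.get ⟨0, hL⟩ with hd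
  set n₀ : ℕ := l₀.length with hn₀
  set t : ℕ := ℓ₁.length with ht
  have hLt : L = t + ℓ₂.length := by simp [hLdef, ht, hℓ]
  obtain ⟨σ₀, hσ₀0, hσ₀end, hσ₀tr⟩ := finRun_states d h₀
  obtain ⟨σ₁, hσ₁0, hσ₁end, hσ₁tr⟩ := finRun_states d h₁
  obtain ⟨σ₂, hσ₂0, hσ₂end, hσ₂tr⟩ := finRun_states d h₂
  set σc : ℕ → M.Q := fun i => if i < t then σ₁ i else σ₂ (i - t) with hσc
  have hc0 : σc 0 = q := by
    rcases Nat.eq_zero_or_pos t with h | h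
    · have hl1 : ℓ₁ = [] := List.length_eq_zero_iff.mp (by omega)
      rw [hl1, finRun_nil] at h₁
      simp only [hσc, if_neg (by omega : ¬ (0:ℕ) < t), Nat.zero_sub]
      rw [hσ₂0, ← h₁]
    · simp only [hσc, if_pos h]; exact hσ₁0
  have hcend : ∀ i, L ≤ i → σc i = q := by
    intro i hi
    have h1 : ¬ i < t := by omega
    simp only [hσc, if_neg h1]
    exact hσ₂end _ (by omega)
  have hcacc : σc (t % L) = s := by
    rcases Nat.lt_or_ge t L with h | h
    · rw [Nat.mod_eq_of_lt h]
      simp only [hσc]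
      rcases Nat.lt_or_ge t t with h' | h'
      · omega
      · simp only [if_neg (lt_irrefl t), Nat.sub_self]; exact hσ₂0
    · -- t = L, so ℓ₂ = [] and s = q
      have ht2 : ℓ₂.length = 0 := by omega
      have : ℓ₂ = [] := List.length_eq_zero_iff.mp ht2
      subst this
      rw [finRun_nil] at h₂
      have htL : t = L := by omega
      rw [htL, Nat.mod_self, hc0, h₂]
  have hctr : ∀ i, i < L → σc (i + 1) ∈ M.step (σc i) (ℓ.getD i d) := by
    intro i hi
    rcases Nat.lt_or_ge i t with h | h
    · have hgd : ℓ.getD i d = ℓ₁.getD i d := List.getD_append _ _ _ _ (by omega)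
      rw [hgd]
      have htr := hσ₁tr i (by omega)
      rcases Nat.lt_or_ge (i+1) t with h' | h'
      · simpa only [hσc, if_pos h, if_pos h'] using htr
      · have hit : i + 1 = t := by omega
        have hs1 : σ₁ (i + 1) = s := hσ₁end _ (by omega)
        have e1 : σc (i + 1) = s := by
          have hnlt : ¬ i + 1 < t := by omega
          simp only [hσc, if_neg hnlt]
          rw [hit, Nat.sub_self]
          exact hσ₂0
        have e2 : σc i = σ₁ i := by simp only [hσc, if_pos h]
        rw [e1, e2, ← hs1]
        exact htr
    · have hgd : ℓ.getD i d = ℓ₂.getD (i - t) d := List.getD_append_right _ _ _ _ (by omega)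
      rw [hgd]
      have htr := hσ₂tr (i - t) (by omega)
      have e : i - t + 1 = (i + 1) - t := by omega
      rw [e] at htr
      simpa only [hσc, if_neg (by omega : ¬ i < t), if_neg (by omega : ¬ i + 1 < t)] using htr
  set w : ℕ → A := fun i => if i < n₀ then l₀.getD i d else ℓ.getD ((i - n₀) % L) d with hw
  set ρ : ℕ → M.Q := fun i => if i < n₀ then σ₀ i else σc ((i - n₀) % L) with hρ
  have hρ0 : ρ 0 = q₀ := by
    rcases Nat.eq_zero_or_pos n₀ with h | h
    · have hl0 : l₀ = [] := List.length_eq_zero_iff.mp (by omega)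
      rw [hl0, finRun_nil] at h₀
      simp only [hρ, if_neg (by omega : ¬ (0:ℕ) < n₀), Nat.zero_sub, Nat.zero_mod]
      rw [hc0, h₀]
    · simp only [hρ, if_pos h]; exact hσ₀0
  have hmodsucc : ∀ j : ℕ, (j + 1) % L = (j % L + 1) % L :=
    fun j => (Nat.ModEq.add_right 1 (Nat.mod_modEq j L)).symm
  have htrans : ∀ i, ρ (i + 1) ∈ M.step (ρ i) (w i) := by
    intro i
    rcases Nat.lt_or_ge i n₀ with h | h
    · have hwi : w i = l₀.getD i d := by simp only [hw, if_pos h]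
      have htr := hσ₀tr i h
      rcases Nat.lt_or_ge (i + 1) n₀ with h' | h'
      · rw [hwi]; simpa only [hρ, if_pos h, if_pos h'] using htr
      · have hin : i + 1 = n₀ := by omega
        have hq : σ₀ (i + 1) = q := hσ₀end _ (by omega)
        have e1 : ρ (i + 1) = q := by
          have hnlt : ¬ i + 1 < n₀ := by omega
          simp only [hρ, if_neg hnlt]
          rw [hin, Nat.sub_self, Nat.zero_mod]
          exact hc0
        have e2 : ρ i = σ₀ i := by simp only [hρ, if_pos h]
        rw [hwi, e1, e2, ← hq]
        exact htr
    · set j : ℕ := i - n₀ with hj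
      set r : ℕ := j % L with hrr
      have hr : r < L := Nat.mod_lt _ hL
      have hwi : w i = ℓ.getD r d := by simp only [hw, if_neg (by omega : ¬ i < n₀)]; rfl
      have hρi : ρ i = σc r := by simp only [hρ, if_neg (by omega : ¬ i < n₀)]; rfl
      have hρi1 : ρ (i + 1) = σc ((j + 1) % L) := by
        simp only [hρ, if_neg (by omega : ¬ i + 1 < n₀)]
        congr 1
        congr 1
        omega
      have htr := hctr r hr
      rcases Nat.lt_or_ge (r + 1) L with h' | h'
      · have : (j + 1) % L = r + 1 := by
          rw [hmodsucc j, ← hrr, Nat.mod_eq_of_lt h']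
        rw [hwi, hρi, hρi1, this]
        exact htr
      · have hrL : r + 1 = L := by omega
        have : (j + 1) % L = 0 := by
          rw [hmodsucc j, ← hrr, hrL, Nat.mod_self]
        rw [hwi, hρi, hρi1, this, hc0, ← hcend (r + 1) (by omega)]
        exact htr
  refine ⟨w, ⟨ρ, ⟨hρ0 ▸ hinit, htrans⟩, ?_⟩, ?_, ?_⟩
  · -- accepting infinitely often
    intro n
    refine ⟨n₀ + (n * L + t % L), ?_, ?_⟩
    · have h1 : n ≤ n * L := Nat.le_mul_of_pos_right n hL
      omega
    · have h2 : ¬ n₀ + (n * L + t % L) < n₀ := by omega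
      simp only [hρ, if_neg h2]
      have e : n₀ + (n * L + t % L) - n₀ = n * L + t % L := by omega
      rw [e, Nat.mul_add_mod', Nat.mod_eq_of_lt (Nat.mod_lt _ hL)]
      rw [hcacc]; exact hacc
  · -- letters not in ℓ
    intro a ha
    have hset : {i : ℕ | w i = a} = {i : ℕ | i < l₀.length ∧ l₀.getD i d = a} := by
      ext i
      simp only [Set.mem_setOf_eq]
      constructor
      · intro hi
        rcases Nat.lt_or_ge i n₀ with h | h
        · exact ⟨h, by rw [← hi]; simp only [hw, if_pos h]⟩
        · exfalso
          apply ha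
          rw [← hi]
          simp only [hw, if_neg (by omega : ¬ i < n₀)]
          rw [List.getD_eq_getElem _ _ (Nat.mod_lt _ hL)]
          exact List.getElem_mem _
      · rintro ⟨h, hg⟩
        simp only [hw, if_pos h]
        rw [if_pos (show i < n₀ from h)]
        exact hg
    show {i : ℕ | w i = a}.encard = _
    rw [hset, encard_count]
    rfl
  · -- letters in ℓ occur infinitely often
    intro a ha
    obtain ⟨u, hu, hua⟩ := List.mem_iff_getElem.mp ha
    show {i : ℕ | w i = a}.encard = ⊤
    rw [Set.encard_eq_top_iff]
    apply Set.infinite_of_injective_forall_mem (f := fun k : ℕ => n₀ + (k * L + u))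
    · intro k₁ k₂ hk
      simp only [add_right_cancel_iff, Nat.add_left_cancel_iff] at hk
      exact Nat.eq_of_mul_eq_mul_right hL hk
    · intro k
      simp only [Set.mem_setOf_eq, hw, if_neg (by omega : ¬ n₀ + (k * L + u) < n₀)]
      have e : n₀ + (k * L + u) - n₀ = k * L + u := by omega
      rw [e, Nat.mul_add_mod', Nat.mod_eq_of_lt hu, List.getD_eq_getElem _ _ hu]
      exact hua


lemma infinite_exists_gt {S : Set ℕ} (hS : S.Infinite) (n : ℕ) : ∃ m ∈ S, n < m := by
  by_contra h
  push_neg at h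
  exact hS (Set.Finite.subset (Set.finite_Iic n) h)

variable (M) in
def Good (m : A → ℕ∞) (q : M.Q) : Prop :=
  (∃ s ∈ M.accept, ∃ l₁ l₂, FinRun M q l₁ s ∧ FinRun M s l₂ q ∧
      ∀ a ∈ l₁ ++ l₂, m a = ⊤) ∧
    ∀ a, m a = ⊤ → ∃ l, FinRun M q l q ∧ a ∈ l ∧ ∀ b ∈ l, m b = ⊤

variable (M) in
noncomputable def FF (m : A → ℕ∞) : Set (A → ℕ) :=
  ⋃ (q₀ : M.Q), ⋃ (q : M.Q),
    if q₀ ∈ M.init ∧ Good M m q then ψ '' {l | FinRun M q₀ l q} else ∅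

lemma FF_semilinear (m : A → ℕ∞) : IsSemilinearSet' (FF M m) := by
  refine isSemilinearSet_iUnion fun q₀ => isSemilinearSet_iUnion fun q => ?_
  split
  · have h : {l : List A | FinRun M q₀ l q}
        = {l | Walk M (↑(Finset.univ : Finset M.Q)) q₀ q l} := by
      ext l
      rw [Set.mem_setOf_eq, Set.mem_setOf_eq, Finset.coe_univ, walk_univ_iff]
    rw [h]
    exact walkParikh_semilinear _ _ _
  · exact isSemilinearSet_empty

lemma good_loop {m : A → ℕ∞} {q : M.Q}
    (hg : ∀ a, m a = ⊤ → ∃ l, FinRun M q l q ∧ a ∈ l ∧ ∀ b ∈ l, m b = ⊤) (s : Finset A) :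
    ∃ l, FinRun M q l q ∧ (∀ b ∈ l, m b = ⊤) ∧ ∀ a ∈ s, m a = ⊤ → a ∈ l := by
  induction s using Finset.induction_on with
  | empty => exact ⟨[], finRun_nil.mpr rfl, by simp, by simp⟩
  | @insert a s ha ih =>
    obtain ⟨l, hl, hlm, hls⟩ := ih
    by_cases hma : m a = ⊤
    · obtain ⟨l', hl', ha', hm'⟩ := hg a hma
      refine ⟨l' ++ l, hl'.append hl, ?_, ?_⟩
      · intro b hb; rcases List.mem_append.mp hb with h | h
        exacts [hm' b h, hlm b h]
      · intro b hb hmb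
        rcases Finset.mem_insert.mp hb with rfl | h
        · exact List.mem_append.mpr (Or.inl ha')
        · exact List.mem_append.mpr (Or.inr (hls b h hmb))
    · refine ⟨l, hl, hlm, fun b hb hmb => ?_⟩
      rcases Finset.mem_insert.mp hb with rfl | h
      · exact absurd hmb hma
      · exact hls b h hmb

end SLAux

open SLAux

/-- The Parikh image of the jumping language of a Büchi automaton is a
masked semilinear set. -/
theorem parikh_jumpLang_maskedSemilinear (A : Type) [Fintype A] (M : BuchiAutomaton A) :
    IsMaskedSemilinear (parikhInf '' JumpLang M) := by
  refine ⟨fun m => FF M m, fun m _ => FF_semilinear m, ?_⟩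
  have himg : parikhInf '' JumpLang M = parikhInf '' M.lang := by
    apply Set.Subset.antisymm
    · rintro v ⟨w, ⟨w', hw', hl⟩, rfl⟩
      exact ⟨w', hl, hw'⟩
    · rintro v ⟨w, hw, rfl⟩
      exact ⟨w, ⟨w, rfl, hw⟩, rfl⟩
  rw [himg]
  ext v
  simp only [Set.mem_iUnion, Set.mem_setOf_eq, Set.mem_image]
  constructor
  · rintro ⟨w, hw, rfl⟩
    obtain ⟨ρ, ⟨hρinit, hρtr⟩, hρacc⟩ := hw
    set m : A → ℕ∞ := fun a => if parikhInf w a = ⊤ then ⊤ else 0 with hmdef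
    have hmtop : ∀ a, m a = ⊤ ↔ parikhInf w a = ⊤ := by
      intro a; by_cases h : parikhInf w a = ⊤ <;> simp [hmdef, h]
    have hmask : IsMask m := by
      refine ⟨fun a => ?_, ?_⟩
      · by_cases h : parikhInf w a = ⊤ <;> simp [hmdef, h]
      · obtain ⟨a, ha⟩ := exists_infinite_fiber_on (Set.infinite_univ (α := ℕ)) w
        refine ⟨a, (hmtop a).mpr ?_⟩
        rw [parikhInf, Set.encard_eq_top_iff]
        exact ha.mono (fun i hi => hi.2)
    have hfin : (⋃ a ∈ {a : A | m a ≠ ⊤}, {i | w i = a}).Finite := by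
      refine Set.Finite.biUnion (Set.toFinite _) (fun a ha => ?_)
      rw [← Set.not_infinite]
      intro hinf
      exact ha ((hmtop a).mpr (Set.encard_eq_top_iff.mpr hinf))
    obtain ⟨N, hN⟩ := hfin.bddAbove
    have hNb : ∀ i, N + 1 ≤ i → m (w i) = ⊤ := by
      intro i hi
      by_contra hcon
      have hmem : i ∈ ⋃ a ∈ {a : A | m a ≠ ⊤}, {j | w j = a} := by
        exact Set.mem_biUnion hcon rfl
      have := hN hmem
      omega
    obtain ⟨q, hq⟩ := exists_infinite_fiber_on (Set.Ici_infinite (N + 1)) ρ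
    obtain ⟨i₀, hi₀N, hi₀q⟩ := hq.nonempty
    set d : A := w 0 with hddef
    set l₀ : List A := List.ofFn (fun k : Fin i₀ => w k) with hl₀def
    have hrun₀ : FinRun M (ρ 0) l₀ q := by
      have h := finRun_ofFn hρtr 0 i₀
      rw [Nat.zero_add] at h
      rw [hi₀q] at h
      simpa using h
    -- Good m q
    have hgood : Good M m q := by
      constructor
      · obtain ⟨j, hj, hjacc⟩ := hρacc i₀
        obtain ⟨i₁, hi₁mem, hi₁gt⟩ := infinite_exists_gt hq j
        obtain ⟨hi₁N, hi₁q⟩ := hi₁mem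
        refine ⟨ρ j, hjacc, List.ofFn (fun k : Fin (j - i₀) => w (i₀ + k)),
          List.ofFn (fun k : Fin (i₁ - j) => w (j + k)), ?_, ?_, ?_⟩
        · have h := finRun_ofFn hρtr i₀ (j - i₀)
          rw [show i₀ + (j - i₀) = j by omega] at h
          rwa [hi₀q] at h
        · have h := finRun_ofFn hρtr j (i₁ - j)
          rw [show j + (i₁ - j) = i₁ by omega, hi₁q] at h
          exact h
        · intro a haa
          rcases List.mem_append.mp haa with h | h <;>
          · obtain ⟨k, hk⟩ := Set.mem_range.mp (List.mem_ofFn.mp h)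
            rw [← hk]
            refine hNb _ (by have := Set.mem_Ici.mp hi₀N; omega)
      · intro a hma
        have hainf : {i | w i = a}.Infinite :=
          Set.encard_eq_top_iff.mp ((hmtop a).mp hma)
        obtain ⟨k, hk, hkgt⟩ := infinite_exists_gt hainf i₀
        obtain ⟨i₂, hi₂mem, hi₂gt⟩ := infinite_exists_gt hq k
        obtain ⟨hi₂N, hi₂q⟩ := hi₂mem
        refine ⟨List.ofFn (fun t : Fin (i₂ - i₀) => w (i₀ + t)), ?_, ?_, ?_⟩
        · have h := finRun_ofFn hρtr i₀ (i₂ - i₀)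
          rw [show i₀ + (i₂ - i₀) = i₂ by omega, hi₂q, hi₀q] at h
          exact h
        · rw [List.mem_ofFn]
          exact ⟨⟨k - i₀, by omega⟩, by simp only; rw [show i₀ + (k - i₀) = k by omega]; exact hk⟩
        · intro b hb
          obtain ⟨t, ht⟩ := Set.mem_range.mp (List.mem_ofFn.mp hb)
          rw [← ht]
          refine hNb _ (by have := Set.mem_Ici.mp hi₀N; omega)
    refine ⟨m, hmask, ψ l₀, ?_, ?_⟩
    · rw [FF]
      refine Set.mem_iUnion.mpr ⟨ρ 0, Set.mem_iUnion.mpr ⟨q, ?_⟩⟩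
      rw [if_pos ⟨hρinit, hgood⟩]
      exact ⟨l₀, hrun₀, rfl⟩
    · funext a
      by_cases hma : m a = ⊤
      · simp only [maskAdd]
        simp only [hma, add_top]
        exact ((hmtop a).mp hma).symm
      · have hma0 : m a = 0 := ((hmask.1 a).resolve_right hma)
        have hset : {i : ℕ | w i = a} = {i : ℕ | i < l₀.length ∧ l₀.getD i d = a} := by
          ext i
          simp only [Set.mem_setOf_eq, hl₀def, List.length_ofFn]
          constructor
          · intro hi
            have hilt : i < i₀ := by
              by_contra hge
              have := hNb i (by have := Set.mem_Ici.mp hi₀N; omega)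
              rw [hi] at this
              exact hma this
            refine ⟨hilt, ?_⟩
            rw [List.getD_eq_getElem _ _ (by simpa using hilt), List.getElem_ofFn]
            exact hi
          · rintro ⟨hilt, hg⟩
            rw [List.getD_eq_getElem _ _ (by simpa using hilt), List.getElem_ofFn] at hg
            exact hg
        simp only [maskAdd]
        simp only [hma0, add_zero]
        rw [parikhInf, hset, encard_count]
        rfl
  · rintro ⟨m, hm, x, hx, rfl⟩
    rw [FF] at hx
    simp only [Set.mem_iUnion] at hx
    obtain ⟨q₀, qq, hx⟩ := hx
    by_cases hc : q₀ ∈ M.init ∧ Good M m qq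
    · rw [if_pos hc] at hx
      obtain ⟨hinit, hgood⟩ := hc
      obtain ⟨l₀, hl₀, rfl⟩ := hx
      obtain ⟨⟨s, hacc, l₁, l₂, hr₁, hr₂, hmem⟩, hloops⟩ := hgood
      obtain ⟨lc, hlc, hlcm, hlcall⟩ := good_loop hloops Finset.univ
      have hr₂' : FinRun M s (l₂ ++ lc) qq := hr₂.append hlc
      have hne : l₁ ++ (l₂ ++ lc) ≠ [] := by
        obtain ⟨a, hma⟩ := hm.2
        have halc : a ∈ lc := hlcall a (Finset.mem_univ a) hma
        intro hcontra
        have : a ∈ l₁ ++ (l₂ ++ lc) := by simp [halc]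
        rw [hcontra] at this
        simp at this
      obtain ⟨w, hwl, hout, hin⟩ := lasso hinit hl₀ hr₁ hacc hr₂' hne
      refine ⟨w, hwl, ?_⟩
      funext a
      by_cases hma : m a = ⊤
      · have hmem' : a ∈ l₁ ++ (l₂ ++ lc) := by
          have := hlcall a (Finset.mem_univ a) hma
          simp [this]
        rw [hin a hmem']
        simp only [maskAdd]
        simp [hma]
      · have hma0 : m a = 0 := ((hm.1 a).resolve_right hma)
        have hnotin : a ∉ l₁ ++ (l₂ ++ lc) := by
          intro hmem'
          rcases List.mem_append.mp hmem' with h | h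
          · exact hma (hmem a (List.mem_append.mpr (Or.inl h)))
          · rcases List.mem_append.mp h with h' | h'
            · exact hma (hmem a (List.mem_append.mpr (Or.inr h')))
            · exact hma (hlcm a h')
        rw [hout a hnotin]
        simp only [maskAdd]
        simp [hma0]
    · rw [if_neg hc] at hx
      exact absurd hx (Set.notMem_empty x)
end

section
/- For every nondeterministic Büchi automaton A over a finite alphabet Σ and every k ≥ 1, there exists a nondeterministic Büchi automaton B_k over Σ such that L(B_k) = J_k⊞(A); moreover, if A has n states, B_k can be taken with at most k^{|Σ|}·n + n states. -/
open scoped Classical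

/- ==================== Auxiliary development ==================== -/

namespace KWProof

variable {A : Type}

/-- Number of occurrences of `a` among positions `[s, s+r)` of `u`. -/
noncomputable def cnt (u : ℕ → A) (s r : ℕ) (a : A) : ℕ :=
  ((Finset.Ico s (s + r)).filter (fun j => u j = a)).card

lemma cnt_zero (u : ℕ → A) (s : ℕ) (a : A) : cnt u s 0 a = 0 := by simp [cnt]

lemma cnt_succ (u : ℕ → A) (s r : ℕ) (a : A) :
    cnt u s (r + 1) a = cnt u s r a + (if u (s + r) = a then 1 else 0) := by
  unfold cnt
  have h : s + (r + 1) = (s + r) + 1 := by omega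
  rw [h, Nat.Ico_succ_right_eq_insert_Ico (by omega), Finset.filter_insert]
  by_cases hu : u (s + r) = a
  · rw [if_pos hu, Finset.card_insert_of_notMem (by simp), if_pos hu]
  · rw [if_neg hu, if_neg hu, Nat.add_zero]

lemma cnt_le (u : ℕ → A) (s r : ℕ) (a : A) : cnt u s r a ≤ r :=
  le_trans (Finset.card_filter_le _ _) (le_of_eq (by rw [Nat.card_Ico]; omega))

lemma sum_cnt [Fintype A] (u : ℕ → A) (s r : ℕ) : ∑ a, cnt u s r a = r := by
  have h := Finset.card_eq_sum_card_fiberwise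
    (s := Finset.Ico s (s + r)) (t := Finset.univ) (f := u) (fun x _ => Finset.mem_univ _)
  rw [Nat.card_Ico] at h
  unfold cnt
  omega

lemma cnt_congr {u u' : ℕ → A} {s r : ℕ} (a : A)
    (h : ∀ j, s ≤ j → j < s + r → u j = u' j) : cnt u s r a = cnt u' s r a := by
  unfold cnt
  congr 1
  apply Finset.filter_congr
  intro j hj
  rw [Finset.mem_Ico] at hj
  rw [h j hj.1 hj.2]

lemma cnt_shift (u : ℕ → A) (s r : ℕ) (a : A) :
    cnt (fun j => u (s + j)) 0 r a = cnt u s r a := by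
  induction r with
  | zero => simp [cnt_zero]
  | succ n ih => rw [cnt_succ, cnt_succ, ih]; simp

lemma winCount_eq (w : ℕ → A) (k i : ℕ) (a : A) :
    winCount w k i a = cnt w (k * i) k a := by
  unfold winCount cnt
  rw [← Set.ncard_coe_finset]
  congr 1
  ext j
  simp only [Finset.coe_filter, Finset.mem_Ico, Set.mem_setOf_eq]
  tauto

/-- The state space of the window automaton. -/
abbrev QB (M : BuchiAutomaton A) (k : ℕ) : Type := ((A → Fin k) × M.Q) ⊕ M.Q

variable (M : BuchiAutomaton A) (k : ℕ)

/-- Count component of a state. -/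
def stCnt : QB M k → A → ℕ
  | Sum.inl (c, _) => fun a => (c a : ℕ)
  | Sum.inr _ => fun _ => 0

/-- Automaton component of a state. -/
def stQ : QB M k → M.Q
  | Sum.inl (_, q) => q
  | Sum.inr q => q

variable (hk : 0 < k)

/-- Truncate a vector of naturals to `Fin k` (mod `k`). -/
noncomputable def mkFin (v : A → ℕ) : A → Fin k := fun a => ⟨v a % k, Nat.mod_lt _ hk⟩

/-- The zero count vector. -/
def zeroc : A → Fin k := fun _ => ⟨0, hk⟩

/-- The transition relation of the window automaton. -/
noncomputable def nextSet [Fintype A] (c : A → ℕ) (q : M.Q) (a : A) : Set (QB M k) :=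
  if (∑ b, (c b + if a = b then 1 else 0)) < k then
    {Sum.inl (mkFin k hk (fun b => c b + if a = b then 1 else 0), q)}
  else if (∑ b, (c b + if a = b then 1 else 0)) = k then
    {s | ∃ (q' : M.Q) (u : ℕ → A) (p : ℕ → M.Q), p 0 = q ∧ p k = q' ∧
      (∀ j, j < k → p (j + 1) ∈ M.step (p j) (u j)) ∧
      (∀ b, cnt u 0 k b = c b + if a = b then 1 else 0) ∧
      (s = Sum.inl (zeroc k hk, q') ∨
        (s = Sum.inr q' ∧ ∃ j, j < k ∧ p (j + 1) ∈ M.accept))}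
  else ∅

/-- The window automaton. -/
noncomputable def BB [Fintype A] : BuchiAutomaton A where
  Q := QB M k
  fin := inferInstance
  step s a := nextSet M k hk (stCnt M k s) (stQ M k s) a
  init := {s | ∃ q ∈ M.init, s = Sum.inl (zeroc k hk, q)}
  accept := Set.range Sum.inr


lemma bnd_unique {s : QB M k} {q q' : M.Q}
    (h : s = Sum.inl (zeroc k hk, q) ∨ s = Sum.inr q)
    (h' : s = Sum.inl (zeroc k hk, q') ∨ s = Sum.inr q') : q = q' := by
  rcases h with h | h <;> rcases h' with h' | h' <;> rw [h] at h' <;> simp_all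

include hk in
lemma divmod (i j : ℕ) (hj : j < k) : (k * i + j) / k = i ∧ (k * i + j) % k = j :=
  ⟨by rw [Nat.mul_add_div hk, Nat.div_eq_of_lt hj, Nat.add_zero],
   by rw [Nat.mul_add_mod, Nat.mod_eq_of_lt hj]⟩

lemma mem_nextSet_mid [Fintype A] (c : A → ℕ) (q : M.Q) (a : A) (v : A → ℕ)
    (hv : ∀ b, v b = c b + if a = b then 1 else 0) (hsum : ∑ b, v b < k) :
    Sum.inl (mkFin k hk v, q) ∈ nextSet M k hk c q a := by
  unfold nextSet
  have he : (fun b => c b + if a = b then 1 else 0) = v := funext fun b => (hv b).symm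
  rw [he, if_pos hsum]
  rfl

lemma mem_nextSet_bnd [Fintype A] (c : A → ℕ) (q : M.Q) (a : A) (v : A → ℕ)
    (hv : ∀ b, v b = c b + if a = b then 1 else 0) (hsum : ∑ b, v b = k)
    (s : QB M k) (q' : M.Q) (u : ℕ → A) (p : ℕ → M.Q)
    (h0 : p 0 = q) (hK : p k = q')
    (hstp : ∀ j, j < k → p (j + 1) ∈ M.step (p j) (u j))
    (hcnt : ∀ b, cnt u 0 k b = v b)
    (hs : s = Sum.inl (zeroc k hk, q') ∨ (s = Sum.inr q' ∧ ∃ j, j < k ∧ p (j + 1) ∈ M.accept)) :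
    s ∈ nextSet M k hk c q a := by
  unfold nextSet
  have he : (fun b => c b + if a = b then 1 else 0) = v := funext fun b => (hv b).symm
  rw [he, if_neg (by simp [hsum]), if_pos hsum]
  exact ⟨q', u, p, h0, hK, hstp, fun b => (hcnt b).trans (hv b), hs⟩

lemma nextSet_elim [Fintype A] (c : A → ℕ) (q : M.Q) (a : A) (s : QB M k)
    (hs : s ∈ nextSet M k hk c q a) :
    ((∑ b, (c b + if a = b then 1 else 0)) < k ∧
      s = Sum.inl (mkFin k hk (fun b => c b + if a = b then 1 else 0), q)) ∨
    ((∑ b, (c b + if a = b then 1 else 0)) = k ∧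
      ∃ (q' : M.Q) (u : ℕ → A) (p : ℕ → M.Q), p 0 = q ∧ p k = q' ∧
        (∀ j, j < k → p (j + 1) ∈ M.step (p j) (u j)) ∧
        (∀ b, cnt u 0 k b = c b + if a = b then 1 else 0) ∧
        (s = Sum.inl (zeroc k hk, q') ∨
          (s = Sum.inr q' ∧ ∃ j, j < k ∧ p (j + 1) ∈ M.accept))) := by
  unfold nextSet at hs
  split_ifs at hs with h1 h2
  · exact Or.inl ⟨h1, hs⟩
  · exact Or.inr ⟨h2, hs⟩
  · exact absurd hs (Set.notMem_empty s)


/-- The run of `BB` built from a run `ρ` of `M` (on a window-permuted word), while reading `w`. -/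
noncomputable def sig (w : ℕ → A) (ρ : ℕ → M.Q) (t : ℕ) : QB M k :=
  if t % k = 0 then
    (if 0 < t ∧ ∃ j, j < k ∧ ρ (k * (t / k - 1) + j + 1) ∈ M.accept then Sum.inr (ρ t)
     else Sum.inl (zeroc k hk, ρ t))
  else Sum.inl (mkFin k hk (fun a => cnt w (k * (t / k)) (t % k) a), ρ (k * (t / k)))

include hk in
lemma sig_stCnt (w : ℕ → A) (ρ : ℕ → M.Q) (t : ℕ) (a : A) :
    stCnt M k (sig M k hk w ρ t) a = cnt w (k * (t / k)) (t % k) a := by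
  unfold sig
  split_ifs with h1 h2
  · simp [stCnt, h1, cnt_zero]
  · simp [stCnt, zeroc, h1, cnt_zero]
  · simp only [stCnt, mkFin]
    exact Nat.mod_eq_of_lt (lt_of_le_of_lt (cnt_le _ _ _ _) (Nat.mod_lt _ hk))

lemma sig_stQ (w : ℕ → A) (ρ : ℕ → M.Q) (t : ℕ) :
    stQ M k (sig M k hk w ρ t) = ρ (k * (t / k)) := by
  have ht : k * (t / k) + t % k = t := Nat.div_add_mod t k
  unfold sig
  split_ifs with h1 h2
  · show ρ t = ρ (k * (t / k)); congr 1; omega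
  · show ρ t = ρ (k * (t / k)); congr 1; omega
  · rfl

lemma lang_sup [Fintype A] : KWinLang M k ⊆ (BB M k hk).lang := by
  rintro w ⟨w', hperm, ρ, ⟨hinit0, hstep0⟩, hacc0⟩
  refine ⟨sig M k hk w ρ, ⟨⟨ρ 0, hinit0, ?_⟩, ?_⟩, ?_⟩
  · unfold sig
    rw [if_pos (Nat.zero_mod k), if_neg (by simp)]
  · intro t
    have hr : t % k < k := Nat.mod_lt _ hk
    have ht : k * (t / k) + t % k = t := Nat.div_add_mod t k
    show sig M k hk w ρ (t + 1) ∈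
      nextSet M k hk (stCnt M k (sig M k hk w ρ t)) (stQ M k (sig M k hk w ρ t)) (w t)
    rw [sig_stQ]
    have hv : ∀ b, cnt w (k * (t / k)) (t % k + 1) b =
        stCnt M k (sig M k hk w ρ t) b + if w t = b then 1 else 0 := by
      intro b
      rw [sig_stCnt]
      have hcs := cnt_succ w (k * (t / k)) (t % k) b
      rw [ht] at hcs
      exact hcs
    by_cases hlt : t % k + 1 < k
    · have hmem := mem_nextSet_mid M k hk (stCnt M k (sig M k hk w ρ t)) (ρ (k * (t / k)))
        (w t) (fun b => cnt w (k * (t / k)) (t % k + 1) b) hv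
        (by rw [sum_cnt]; exact hlt)
      have hsig : sig M k hk w ρ (t + 1) =
          Sum.inl (mkFin k hk (fun b => cnt w (k * (t / k)) (t % k + 1) b), ρ (k * (t / k))) := by
        have e1 : t + 1 = k * (t / k) + (t % k + 1) := by omega
        obtain ⟨ed, em⟩ := divmod k hk (t / k) (t % k + 1) hlt
        unfold sig
        rw [if_neg (by rw [e1, em]; omega)]
        rw [e1, em, ed]
      rw [hsig]
      exact hmem
    · -- window boundary
      have hke : t % k + 1 = k := by omega
      have e1 : t + 1 = k * (t / k) + k := by omega
      have e2 : t + 1 = k * (t / k + 1) := by rw [Nat.mul_succ]; omega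
      refine mem_nextSet_bnd M k hk (stCnt M k (sig M k hk w ρ t)) (ρ (k * (t / k))) (w t)
        (fun b => cnt w (k * (t / k)) (t % k + 1) b) hv
        (by rw [sum_cnt]; exact hke)
        (sig M k hk w ρ (t + 1)) (ρ (t + 1))
        (fun j => w' (k * (t / k) + j)) (fun j => ρ (k * (t / k) + j))
        rfl (by show ρ (k * (t / k) + k) = ρ (t + 1); congr 1; omega)
        (fun j _ => hstep0 (k * (t / k) + j))
        ?_ ?_
      · -- counts
        intro b
        rw [cnt_shift]
        have h1 : cnt w' (k * (t / k)) k b = winCount w' k (t / k) b := (winCount_eq _ _ _ _).symm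
        have h2 : winCount w' k (t / k) b = winCount w k (t / k) b := hperm _ _
        have h3 : winCount w k (t / k) b = cnt w (k * (t / k)) k b := winCount_eq _ _ _ _
        rw [h1, h2, h3, hke]
      · -- the state reached
        have hd : (t + 1) / k = t / k + 1 := by
          rw [e2, Nat.mul_div_cancel_left _ hk]
        have hm : (t + 1) % k = 0 := by rw [e2, Nat.mul_mod_right]
        by_cases hF : ∃ j, j < k ∧ ρ (k * (t / k) + j + 1) ∈ M.accept
        · refine Or.inr ⟨?_, ?_⟩
          · unfold sig
            rw [if_pos hm, if_pos ⟨Nat.succ_pos t, by rw [hd]; simpa using hF⟩]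
          · obtain ⟨j, hj, hacc⟩ := hF
            exact ⟨j, hj, hacc⟩
        · refine Or.inl ?_
          unfold sig
          rw [if_pos hm, if_neg (by rw [hd]; simpa using hF)]
  · -- acceptance
    intro n
    obtain ⟨m, hm, hmacc⟩ := hacc0 (k * n + 1)
    have hm1 : 1 ≤ m := by
      have : n ≤ k * n := Nat.le_mul_of_pos_left n hk
      omega
    have hdm : k * ((m - 1) / k) + (m - 1) % k = m - 1 := Nat.div_add_mod (m - 1) k
    set i := (m - 1) / k with hi
    set j := (m - 1) % k with hj
    have hjk : j < k := Nat.mod_lt _ hk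
    refine ⟨k * (i + 1), ?_, ?_⟩
    · have h1 : n ≤ k * n := Nat.le_mul_of_pos_left n hk
      have h2 : k * (i + 1) = k * i + k := Nat.mul_succ k i
      omega
    · have hm0 : (k * (i + 1)) % k = 0 := Nat.mul_mod_right k (i + 1)
      have hd : (k * (i + 1)) / k = i + 1 := Nat.mul_div_cancel_left _ hk
      have hflag : ∃ j', j' < k ∧ ρ (k * i + j' + 1) ∈ M.accept := by
        refine ⟨j, hjk, ?_⟩
        have : k * i + j + 1 = m := by omega
        rw [this]
        exact hmacc
      show sig M k hk w ρ (k * (i + 1)) ∈ Set.range Sum.inr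
      unfold sig
      rw [if_pos hm0, if_pos ⟨by positivity, by rw [hd]; simpa using hflag⟩]
      exact ⟨ρ (k * (i + 1)), rfl⟩


include hk in
lemma walk [Fintype A] (w : ℕ → A) (σ : ℕ → QB M k)
    (hstep : ∀ t, σ (t + 1) ∈ nextSet M k hk (stCnt M k (σ t)) (stQ M k (σ t)) (w t))
    (i : ℕ) (q : M.Q)
    (hq : σ (k * i) = Sum.inl (zeroc k hk, q) ∨ σ (k * i) = Sum.inr q) :
    ∀ r, r < k → stQ M k (σ (k * i + r)) = q ∧
      (∀ a, stCnt M k (σ (k * i + r)) a = cnt w (k * i) r a) ∧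
      (0 < r → ∃ x, σ (k * i + r) = Sum.inl x) := by
  intro r
  induction r with
  | zero =>
    intro _
    rcases hq with h | h <;> rw [Nat.add_zero, h] <;>
      exact ⟨rfl, fun a => by simp [stCnt, zeroc, cnt_zero], fun h0 => absurd h0 (by omega)⟩
  | succ n ih =>
    intro hn1
    obtain ⟨hQ, hC, -⟩ := ih (by omega)
    have hmem := hstep (k * i + n)
    have hfun : (fun b => stCnt M k (σ (k * i + n)) b + if w (k * i + n) = b then 1 else 0)
        = fun b => cnt w (k * i) (n + 1) b := funext fun b => by
      rw [hC b, ← cnt_succ]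
    have eidx : k * i + (n + 1) = k * i + n + 1 := by omega
    rw [eidx]
    rcases nextSet_elim M k hk _ _ _ _ hmem with ⟨h1, hs⟩ | ⟨h2, -⟩
    · rw [hfun] at hs
      rw [hQ] at hs
      refine ⟨by rw [hs]; rfl, ?_, fun _ => ⟨_, hs⟩⟩
      intro a
      rw [hs]
      simp only [stCnt, mkFin]
      exact Nat.mod_eq_of_lt (lt_of_le_of_lt (cnt_le _ _ _ _) hn1)
    · rw [hfun, sum_cnt] at h2
      omega

include hk in
lemma key [Fintype A] (w : ℕ → A) (σ : ℕ → QB M k)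
    (hstep : ∀ t, σ (t + 1) ∈ nextSet M k hk (stCnt M k (σ t)) (stQ M k (σ t)) (w t))
    (i : ℕ) (q : M.Q)
    (hq : σ (k * i) = Sum.inl (zeroc k hk, q) ∨ σ (k * i) = Sum.inr q) :
    ∃ (q' : M.Q) (u : ℕ → A) (p : ℕ → M.Q),
      (σ (k * (i + 1)) = Sum.inl (zeroc k hk, q') ∨ σ (k * (i + 1)) = Sum.inr q') ∧
      p 0 = q ∧ p k = q' ∧ (∀ j, j < k → p (j + 1) ∈ M.step (p j) (u j)) ∧
      (∀ b, cnt u 0 k b = cnt w (k * i) k b) ∧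
      (σ (k * (i + 1)) = Sum.inr q' → ∃ j, j < k ∧ p (j + 1) ∈ M.accept) := by
  obtain ⟨hQ, hC, -⟩ := walk M k hk w σ hstep i q hq (k - 1) (by omega)
  have hmem := hstep (k * i + (k - 1))
  have eidx : k * i + (k - 1) + 1 = k * (i + 1) := by rw [Nat.mul_succ]; omega
  rw [eidx] at hmem
  have hfun : (fun b => stCnt M k (σ (k * i + (k - 1))) b
      + if w (k * i + (k - 1)) = b then 1 else 0)
      = fun b => cnt w (k * i) (k - 1 + 1) b := funext fun b => by
    rw [hC b, ← cnt_succ]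
  have ek : k - 1 + 1 = k := by omega
  rcases nextSet_elim M k hk _ _ _ _ hmem with ⟨h1, -⟩ | ⟨-, hex⟩
  · rw [hfun, sum_cnt] at h1
    omega
  · obtain ⟨q', u, p, h0, hK, hstp, hcnt, hs⟩ := hex
    rw [hQ] at h0
    refine ⟨q', u, p, ?_, h0, hK, hstp, ?_, ?_⟩
    · rcases hs with h | ⟨h, -⟩
      · exact Or.inl h
      · exact Or.inr h
    · intro b
      have hb := hcnt b
      rw [hC b, ← cnt_succ, ek] at hb
      exact hb
    · intro hinr
      rcases hs with h | ⟨-, hvis⟩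
      · rw [hinr] at h
        exact absurd h (by simp)
      · exact hvis

lemma lang_sub [Fintype A] : (BB M k hk).lang ⊆ KWinLang M k := by
  rintro w ⟨σ, ⟨hinit, hstep'⟩, hacc⟩
  obtain ⟨q0, hq0M, hq0⟩ := hinit
  have hstep : ∀ t, σ (t + 1) ∈ nextSet M k hk (stCnt M k (σ t)) (stQ M k (σ t)) (w t) := hstep'
  have bnd : ∀ i, ∃ q, σ (k * i) = Sum.inl (zeroc k hk, q) ∨ σ (k * i) = Sum.inr q := by
    intro i
    induction i with
    | zero => exact ⟨q0, Or.inl (by rw [Nat.mul_zero]; exact hq0)⟩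
    | succ n ih =>
      obtain ⟨q, hq⟩ := ih
      obtain ⟨q', u, p, hb, -⟩ := key M k hk w σ hstep n q hq
      exact ⟨q', hb⟩
  choose qs hqs using bnd
  have keyall : ∀ i, ∃ up : (ℕ → A) × (ℕ → M.Q),
      up.2 0 = qs i ∧ up.2 k = qs (i + 1) ∧
      (∀ j, j < k → up.2 (j + 1) ∈ M.step (up.2 j) (up.1 j)) ∧
      (∀ b, cnt up.1 0 k b = cnt w (k * i) k b) ∧
      (σ (k * (i + 1)) = Sum.inr (qs (i + 1)) → ∃ j, j < k ∧ up.2 (j + 1) ∈ M.accept) := by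
    intro i
    obtain ⟨q', u, p, hb, h0, hK, hstp, hcnt, hvis⟩ := key M k hk w σ hstep i (qs i) (hqs i)
    have he : q' = qs (i + 1) := bnd_unique M k hk hb (hqs (i + 1))
    subst he
    exact ⟨(u, p), h0, hK, hstp, hcnt, hvis⟩
  choose up hup using keyall
  obtain ⟨w', hw'⟩ : ∃ w'' : ℕ → A, w'' = fun t => (up (t / k)).1 (t % k) := ⟨_, rfl⟩
  obtain ⟨ρ, hρ⟩ : ∃ ρ' : ℕ → M.Q, ρ' = fun t => (up (t / k)).2 (t % k) := ⟨_, rfl⟩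
  have hρat : ∀ i j, j ≤ k → ρ (k * i + j) = (up i).2 j := by
    intro i j hj
    rcases lt_or_eq_of_le hj with h | h
    · obtain ⟨hd, hm⟩ := divmod k hk i j h
      simp only [hρ]
      rw [hd, hm]
    · rw [h]
      have e : k * i + k = k * (i + 1) + 0 := by rw [Nat.mul_succ, Nat.add_zero]
      simp only [hρ]
      rw [e]
      obtain ⟨hd, hm⟩ := divmod k hk (i + 1) 0 hk
      rw [hd, hm, (hup (i + 1)).1]
      exact ((hup i).2.1).symm
  have hw'at : ∀ i j, j < k → w' (k * i + j) = (up i).1 j := by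
    intro i j hj
    obtain ⟨hd, hm⟩ := divmod k hk i j hj
    simp only [hw']
    rw [hd, hm]
  have hqs0 : qs 0 = q0 :=
    bnd_unique M k hk (hqs 0) (Or.inl (by rw [Nat.mul_zero]; exact hq0))
  refine ⟨w', ?_, ρ, ⟨?_, ?_⟩, ?_⟩
  · -- KWinPerm k w' w
    intro i a
    rw [winCount_eq, winCount_eq, ← cnt_shift w' (k * i) k a]
    have hcg : cnt (fun j => w' (k * i + j)) 0 k a = cnt (up i).1 0 k a :=
      cnt_congr a (fun j _ hj => hw'at i j (by omega))
    rw [hcg, (hup i).2.2.2.1 a]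
  · -- initial state
    have h0 : ρ 0 = qs 0 := by
      simp only [hρ]
      rw [Nat.zero_div, Nat.zero_mod]
      exact (hup 0).1
    rw [h0, hqs0]
    exact hq0M
  · -- run steps
    intro t
    have hr : t % k < k := Nat.mod_lt _ hk
    have ht : k * (t / k) + t % k = t := Nat.div_add_mod t k
    have h1 : ρ t = (up (t / k)).2 (t % k) := by
      simp only [hρ]
    have h2 : w' t = (up (t / k)).1 (t % k) := by
      simp only [hw']
    have h3 : ρ (t + 1) = (up (t / k)).2 (t % k + 1) := by
      have e : t + 1 = k * (t / k) + (t % k + 1) := by omega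
      rw [e, hρat (t / k) (t % k + 1) (by omega)]
    rw [h3, h1, h2]
    exact (hup (t / k)).2.2.1 (t % k) hr
  · -- acceptance
    intro n
    obtain ⟨m, hm, hmacc⟩ := hacc (n + k + 1)
    obtain ⟨qm, hqm⟩ := hmacc
    have hdm : k * (m / k) + m % k = m := Nat.div_add_mod m k
    have hm0 : m % k = 0 := by
      by_contra hne
      obtain ⟨-, -, hinl⟩ := walk M k hk w σ hstep (m / k) (qs (m / k)) (hqs (m / k))
        (m % k) (Nat.mod_lt _ hk)
      obtain ⟨x, hx⟩ := hinl (by omega)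
      rw [hdm] at hx
      rw [hx] at hqm
      simp at hqm
    have hmpos : 0 < m := by omega
    have hik : m = k * (m / k) := by omega
    have h1k : 1 ≤ m / k := (Nat.one_le_div_iff hk).mpr (by omega)
    have him : m = k * (m / k - 1 + 1) := by
      have : m / k - 1 + 1 = m / k := by omega
      rw [this]
      exact hik
    set i := m / k - 1 with hi
    have hσm : σ (k * (i + 1)) = Sum.inr (qs (i + 1)) := by
      rcases hqs (i + 1) with h | h
      · rw [← him] at h
        rw [h] at hqm
        simp at hqm
      · exact h
    obtain ⟨j, hjk, hjacc⟩ := (hup i).2.2.2.2 hσm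
    refine ⟨k * i + j + 1, ?_, ?_⟩
    · have hms : m = k * i + k := by rw [him, Nat.mul_succ]
      omega
    · have hval : ρ (k * i + (j + 1)) = (up i).2 (j + 1) := hρat i (j + 1) (by omega)
      rw [show k * i + j + 1 = k * i + (j + 1) from by omega, hval]
      exact hjacc

lemma BB_lang [Fintype A] : (BB M k hk).lang = KWinLang M k :=
  Set.Subset.antisymm (lang_sub M k hk) (lang_sup M k hk)

lemma BB_card [Fintype A] :
    Fintype.card (BB M k hk).Q ≤ k ^ Fintype.card A * Fintype.card M.Q + Fintype.card M.Q := by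
  have h : Fintype.card (BB M k hk).Q = Fintype.card (QB M k) := rfl
  rw [h]
  have h2 : Fintype.card (QB M k) =
      Fintype.card ((A → Fin k) × M.Q) + Fintype.card M.Q := Fintype.card_sum
  rw [h2, Fintype.card_prod]
  have h3 : Fintype.card (A → Fin k) = k ^ Fintype.card A := by
    rw [Fintype.card_fun, Fintype.card_fin]
  rw [h3]

end KWProof

/-- For every Büchi automaton `A` and `k ≥ 1`, the `k`-window jumping language
of `A` is recognized by a Büchi automaton with at most `k^{|Σ|}·n + n` states. -/
theorem kWinLang_buchi (A : Type) [Fintype A] (M : BuchiAutomaton A) (k : ℕ) (hk : 1 ≤ k) :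
    ∃ B : BuchiAutomaton A,
      B.lang = KWinLang M k ∧
      Fintype.card B.Q ≤ k ^ Fintype.card A * Fintype.card M.Q + Fintype.card M.Q := by
  exact ⟨KWProof.BB M k hk, KWProof.BB_lang M k hk, KWProof.BB_card M k hk⟩
end

section
/- For every nondeterministic Büchi automaton A over a finite alphabet Σ there exists a nondeterministic Büchi automaton B over Σ such that J_∃⊞(B) = J(A). -/
open scoped Classical

namespace JWork
variable {A : Type}

/-- interval count -/
noncomputable def cntI (w : ℕ → A) (a : A) (m n : ℕ) : ℕ :=
  {j : ℕ | m ≤ j ∧ j < n ∧ w j = a}.ncard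

lemma cntI_set_finite (w : ℕ → A) (a : A) (m n : ℕ) :
    {j : ℕ | m ≤ j ∧ j < n ∧ w j = a}.Finite :=
  (Set.finite_Iio n).subset (fun j hj => hj.2.1)

lemma cntI_zero (w : ℕ → A) (a : A) {m n : ℕ} (h : n ≤ m) : cntI w a m n = 0 := by
  have : {j : ℕ | m ≤ j ∧ j < n ∧ w j = a} = ∅ := by
    ext j; simp only [Set.mem_setOf_eq, Set.mem_empty_iff_false, iff_false]
    rintro ⟨h1, h2, -⟩; omega
  simp [cntI, this]

lemma cntI_succ (w : ℕ → A) (a : A) {m n : ℕ} (h : m ≤ n) :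
    cntI w a m (n + 1) = cntI w a m n + if w n = a then 1 else 0 := by
  by_cases ha : w n = a
  · have : {j : ℕ | m ≤ j ∧ j < n + 1 ∧ w j = a}
        = insert n {j : ℕ | m ≤ j ∧ j < n ∧ w j = a} := by
      ext j
      simp only [Set.mem_setOf_eq, Set.mem_insert_iff]
      constructor
      · rintro ⟨h1, h2, h3⟩
        rcases Nat.lt_succ_iff_lt_or_eq.mp h2 with h2 | rfl
        · exact Or.inr ⟨h1, h2, h3⟩
        · exact Or.inl rfl
      · rintro (rfl | ⟨h1, h2, h3⟩)
        · exact ⟨h, Nat.lt_succ_self _, ha⟩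
        · exact ⟨h1, h2.trans (Nat.lt_succ_self _), h3⟩
    rw [cntI, this, Set.ncard_insert_of_notMem (by simp) (cntI_set_finite w a m n)]
    simp [ha, cntI]
  · have : {j : ℕ | m ≤ j ∧ j < n + 1 ∧ w j = a} = {j : ℕ | m ≤ j ∧ j < n ∧ w j = a} := by
      ext j
      simp only [Set.mem_setOf_eq]
      constructor
      · rintro ⟨h1, h2, h3⟩
        rcases Nat.lt_succ_iff_lt_or_eq.mp h2 with h2 | rfl
        · exact ⟨h1, h2, h3⟩
        · exact absurd h3 ha
      · rintro ⟨h1, h2, h3⟩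
        exact ⟨h1, h2.trans (Nat.lt_succ_self _), h3⟩
    simp only [cntI, this, ha, ↓reduceIte, add_zero]

lemma cntI_split (w : ℕ → A) (a : A) {m n p : ℕ} (h1 : m ≤ n) (h2 : n ≤ p) :
    cntI w a m p = cntI w a m n + cntI w a n p := by
  induction p, h2 using Nat.le_induction with
  | base => rw [cntI_zero w a (le_refl n)]; ring
  | succ p hp ih =>
      rw [cntI_succ w a (h1.trans hp), cntI_succ w a hp, ih]
      ring

lemma cntI_congr {w w' : ℕ → A} (a : A) {m n : ℕ}
    (h : ∀ j, m ≤ j → j < n → w j = w' j) : cntI w a m n = cntI w' a m n := by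
  have : {j : ℕ | m ≤ j ∧ j < n ∧ w j = a} = {j : ℕ | m ≤ j ∧ j < n ∧ w' j = a} := by
    ext j; simp only [Set.mem_setOf_eq]
    constructor
    · rintro ⟨h1, h2, h3⟩; exact ⟨h1, h2, (h j h1 h2).symm.trans h3⟩
    · rintro ⟨h1, h2, h3⟩; exact ⟨h1, h2, (h j h1 h2).trans h3⟩
  simp [cntI, this]

lemma cntI_mono (w : ℕ → A) (a : A) {m n n' : ℕ} (h : n ≤ n') :
    cntI w a m n ≤ cntI w a m n' :=
  Set.ncard_le_ncard (fun j hj => ⟨hj.1, hj.2.1.trans_le h, hj.2.2⟩) (cntI_set_finite w a m n')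

lemma cntI_le_of_subset_occ (w : ℕ → A) (a : A) (m n : ℕ)
    (h : {j : ℕ | w j = a}.Finite) : cntI w a m n ≤ {j : ℕ | w j = a}.ncard :=
  Set.ncard_le_ncard (fun j hj => hj.2.2) h

lemma sum_cntI [Fintype A] (w : ℕ → A) (n : ℕ) : (∑ a : A, cntI w a 0 n) = n := by
  induction n with
  | zero => simp [cntI_zero]
  | succ n ih =>
      have : ∀ a : A, cntI w a 0 (n+1) = cntI w a 0 n + if w n = a then 1 else 0 :=
        fun a => cntI_succ w a (Nat.zero_le n)
      simp only [this, Finset.sum_add_distrib, ih]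
      simp

lemma cntI_of_list (w : ℕ → A) (a : A) (d : A) (l : List A) :
    ∀ m : ℕ, (∀ t, t < l.length → w (m + t) = l.getD t d) →
      cntI w a m (m + l.length) = l.count a := by
  induction l with
  | nil => intro m _; simpa using cntI_zero w a (le_refl m)
  | cons b tl ih =>
      intro m hm
      have hlen : m + (b :: tl).length = (m+1) + tl.length := by simp; omega
      have h1 : cntI w a m (m + (b :: tl).length)
          = cntI w a m (m+1) + cntI w a (m+1) ((m+1) + tl.length) := by
        rw [hlen, cntI_split w a (Nat.le_succ m) (by omega)]
      have h2 : cntI w a m (m+1) = if w m = a then 1 else 0 := by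
        rw [cntI_succ w a (le_refl m), cntI_zero w a (le_refl m), zero_add]
      have h3 : cntI w a (m+1) ((m+1) + tl.length) = tl.count a := by
        apply ih
        intro t ht
        have := hm (t+1) (by simpa using Nat.succ_lt_succ ht)
        simpa [Nat.add_assoc, Nat.add_comm 1 t] using this
      have hb : w m = b := by simpa using hm 0 (by simp)
      rw [h1, h2, h3, List.count_cons, hb]
      have : ((b == a) = true) ↔ b = a := by simp
      by_cases hba : b = a <;> simp [hba] <;> omega

/-- encard of occurrence set when occurrences bounded. -/
lemma encard_occ_of_bdd {w : ℕ → A} {a : A} {n : ℕ} (h : ∀ j, n ≤ j → w j ≠ a) :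
    {j : ℕ | w j = a}.encard = (cntI w a 0 n : ℕ∞) := by
  have hset : {j : ℕ | w j = a} = {j : ℕ | 0 ≤ j ∧ j < n ∧ w j = a} := by
    ext j; simp only [Set.mem_setOf_eq]
    constructor
    · intro hj
      refine ⟨Nat.zero_le j, ?_, hj⟩
      by_contra hc
      exact h j (by omega) hj
    · rintro ⟨-, -, hj⟩; exact hj
  rw [hset, cntI, Set.ncard_def,
    ENat.coe_toNat (by simpa using (cntI_set_finite w a 0 n).encard_lt_top.ne)]

lemma infinite_occ_of_unbdd {w : ℕ → A} {a : A} (h : ∀ m, ∃ j, m ≤ j ∧ w j = a) :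
    {j : ℕ | w j = a}.Infinite := by
  apply Set.infinite_of_not_bddAbove
  rintro ⟨b, hb⟩
  obtain ⟨j, hj, hja⟩ := h (b+1)
  exact absurd (hb hja) (by omega)

lemma unbdd_of_infinite_occ {w : ℕ → A} {a : A} (h : {j : ℕ | w j = a}.Infinite) :
    ∀ m, ∃ j, m ≤ j ∧ w j = a := by
  intro m
  obtain ⟨j, hj, hjm⟩ := h.exists_gt m
  exact ⟨j, hjm.le, hj⟩

lemma exists_cntI_ge {w : ℕ → A} {a : A} (h : {j : ℕ | w j = a}.Infinite) (c : ℕ) :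
    ∃ N, c ≤ cntI w a 0 N := by
  obtain ⟨t, hts, htf, htc⟩ := h.exists_subset_ncard_eq c
  obtain ⟨b, hb⟩ := htf.bddAbove
  refine ⟨b + 1, ?_⟩
  rw [← htc, cntI]
  apply Set.ncard_le_ncard _ (cntI_set_finite w a 0 (b+1))
  intro j hj
  exact ⟨Nat.zero_le j, by have := hb hj; omega, hts hj⟩


def Steps (M : BuchiAutomaton A) : M.Q → List A → M.Q → Prop
  | q, [], q' => q' = q
  | q, a :: l, q' => ∃ p ∈ M.step q a, Steps M p l q'

def Good (M : BuchiAutomaton A) (q : M.Q) (T : Set A) : Prop :=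
  ∀ a ∈ T, ∃ l : List A, l ≠ [] ∧ (∀ b ∈ l, b ∈ T) ∧ a ∈ l ∧ Steps M q l q

lemma Steps_append {M : BuchiAutomaton A} {q q' q'' : M.Q} {l1 l2 : List A}
    (h1 : Steps M q l1 q') (h2 : Steps M q' l2 q'') : Steps M q (l1 ++ l2) q'' := by
  induction l1 generalizing q with
  | nil => cases h1; exact h2
  | cons a l ih =>
      obtain ⟨p, hp, hs⟩ := h1
      exact ⟨p, hp, ih hs⟩

lemma Steps_flatMap {M : BuchiAutomaton A} {q : M.Q} (f : A → List A)
    (lst : List A) (h : ∀ b ∈ lst, Steps M q (f b) q) :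
    Steps M q (lst.flatMap f) q := by
  induction lst with
  | nil => rfl
  | cons b tl ih =>
      rw [List.flatMap_cons]
      exact Steps_append (h b (by simp)) (ih (fun c hc => h c (by simp [hc])))

/-- From an infinite run, extract Steps on a segment. -/
lemma steps_of_run {M : BuchiAutomaton A} {w : ℕ → A} {ρ : ℕ → M.Q}
    (h : ∀ j, ρ (j+1) ∈ M.step (ρ j) (w j)) :
    ∀ (len m : ℕ), Steps M (ρ m) (List.ofFn (fun t : Fin len => w (m + t))) (ρ (m + len)) := by
  intro len
  induction len with
  | zero => intro m; simp; rfl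
  | succ len ih =>
      intro m
      rw [List.ofFn_succ]
      refine ⟨ρ (m+1), by simpa using h m, ?_⟩
      have := ih (m+1)
      have e : ∀ t : Fin len, m + (t.succ : ℕ) = (m + 1) + t := by intro t; simp; omega
      have e2 : m + (len + 1) = (m + 1) + len := by omega
      rw [show (List.ofFn fun i : Fin len => w (m + (i.succ : ℕ)))
          = List.ofFn fun i : Fin len => w ((m+1) + i) from by
        congr 1; funext i; rw [e i], e2]
      exact this

/-- From Steps, extract an indexed run along the list. -/
lemma run_of_steps {M : BuchiAutomaton A} {q q' : M.Q} {l : List A}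
    (h : Steps M q l q') :
    ∃ σ : ℕ → M.Q, σ 0 = q ∧ σ l.length = q' ∧
      ∀ j (hj : j < l.length), σ (j+1) ∈ M.step (σ j) (l.get ⟨j, hj⟩) := by
  induction l generalizing q with
  | nil => exact ⟨fun _ => q, rfl, h.symm, fun j hj => absurd hj (by simp)⟩
  | cons a tl ih =>
      obtain ⟨p, hp, hs⟩ := h
      obtain ⟨σ', h0, hend, hstep⟩ := ih hs
      refine ⟨fun j => Nat.rec q (fun j' _ => σ' j') j, rfl, hend, ?_⟩
      intro j hj
      cases j with
      | zero => simpa [h0] using hp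
      | succ j => exact hstep j (by simpa using hj)

lemma winCount_eq_cntI (w : ℕ → A) (k i : ℕ) (a : A) :
    winCount w k i a = cntI w a (k * i) (k * i + k) := rfl

section L1
variable {k : ℕ} {w w' : ℕ → A}

lemma kwin_prefix (h : KWinPerm k w w') (a : A) :
    ∀ N, cntI w a 0 (k * N) = cntI w' a 0 (k * N) := by
  intro N
  induction N with
  | zero => simp [cntI_zero _ _ (le_refl 0)]
  | succ N ih =>
      have e : k * (N + 1) = k * N + k := by ring
      rw [e, cntI_split w a (Nat.zero_le _) (Nat.le_add_right _ _),
        cntI_split w' a (Nat.zero_le _) (Nat.le_add_right _ _), ih]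
      have := h N a
      rw [winCount_eq_cntI, winCount_eq_cntI] at this
      rw [this]

lemma kwin_infinite (hk : 1 ≤ k) (h : KWinPerm k w w') (a : A)
    (hw : {j : ℕ | w j = a}.Infinite) : {j : ℕ | w' j = a}.Infinite := by
  by_contra hfin
  rw [Set.not_infinite] at hfin
  set C := {j : ℕ | w' j = a}.ncard with hC
  obtain ⟨N, hN⟩ := exists_cntI_ge hw (C + 1)
  have h1 : cntI w a 0 (k * N) = cntI w' a 0 (k * N) := kwin_prefix h a N
  have h2 : cntI w a 0 N ≤ cntI w a 0 (k * N) :=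
    cntI_mono w a (by nlinarith)
  have h3 : cntI w' a 0 (k * N) ≤ C := cntI_le_of_subset_occ w' a 0 (k * N) hfin
  omega

lemma kwin_parikh (hk : 1 ≤ k) (h : KWinPerm k w w') :
    parikhInf w = parikhInf w' := by
  funext a
  show {j : ℕ | w j = a}.encard = {j : ℕ | w' j = a}.encard
  by_cases hw : {j : ℕ | w j = a}.Infinite
  · rw [Set.encard_eq_top hw, Set.encard_eq_top (kwin_infinite hk h a hw)]
  · have hw' : ¬ {j : ℕ | w' j = a}.Infinite := by
      intro hw'
      exact hw (kwin_infinite hk (fun i b => (h i b).symm) a hw')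
    rw [Set.not_infinite] at hw hw'
    obtain ⟨b1, hb1⟩ := hw.bddAbove
    obtain ⟨b2, hb2⟩ := hw'.bddAbove
    set N := b1 + b2 + 1 with hN
    have e1 : {j : ℕ | w j = a}.encard = (cntI w a 0 (k * N) : ℕ∞) := by
      apply encard_occ_of_bdd
      intro j hj hja
      have := hb1 hja
      have : N ≤ k * N := by nlinarith
      omega
    have e2 : {j : ℕ | w' j = a}.encard = (cntI w' a 0 (k * N) : ℕ∞) := by
      apply encard_occ_of_bdd
      intro j hj hja
      have := hb2 hja
      have : N ≤ k * N := by nlinarith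
      omega
    rw [e1, e2, kwin_prefix h a N]
end L1

variable [Fintype A]

noncomputable def BB (M : BuchiAutomaton A) : BuchiAutomaton A where
  Q := M.Q ⊕ (Set A × Set A)
  fin := inferInstance
  step := fun s a =>
    match s with
    | Sum.inl p => (Sum.inl '' M.step p a) ∪
        {s' | ∃ T : Set A, p ∈ M.accept ∧ Good M p T ∧ a ∈ T ∧ s' = Sum.inr (T, T)}
    | Sum.inr (T, F) =>
        {s' | a ∈ T ∧ (s' = Sum.inr (T, F \ {a}) ∨ (F ⊆ {a} ∧ s' = Sum.inr (T, T)))}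
  init := (Sum.inl '' M.init) ∪
      {s | ∃ (T : Set A) (q0 : M.Q), q0 ∈ M.init ∧ q0 ∈ M.accept ∧ Good M q0 T ∧
        s = Sum.inr (T, T)}
  accept := {s | ∃ T : Set A, s = Sum.inr (T, T)}

/-- the second component of a phase-2 state -/
def Fof {M : BuchiAutomaton A} : (BB M).Q → Set A
  | Sum.inl _ => ∅
  | Sum.inr (_, F) => F

/-- In an accepting run eventually trapped in phase 2 with mask `T`, every letter of `T`
occurs past any point. -/
lemma phase2_letters {M : BuchiAutomaton A} {w : ℕ → A} {ρ : ℕ → (BB M).Q} {T : Set A}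
    {n : ℕ}
    (hstep : ∀ j, ρ (j+1) ∈ (BB M).step (ρ j) (w j))
    (hph : ∀ j, n ≤ j → ∃ F, ρ j = Sum.inr (T, F))
    (hacc : ∀ m, ∃ j, m ≤ j ∧ ρ j ∈ (BB M).accept) :
    ∀ a ∈ T, ∀ m, ∃ j, m ≤ j ∧ w j = a := by
  set F : ℕ → Set A := fun j => Fof (ρ j) with hF
  have hρ : ∀ j, n ≤ j → ρ j = Sum.inr (T, F j) := by
    intro j hj
    obtain ⟨G, hG⟩ := hph j hj
    rw [hG]; simp [hF, hG, Fof]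
    rfl
  have hstep2 : ∀ j, n ≤ j → w j ∈ T ∧
      (F (j+1) = F j \ {w j} ∨ (F j ⊆ {w j} ∧ F (j+1) = T)) := by
    intro j hj
    have h1 := hstep j
    rw [hρ j hj] at h1
    have h2 := hρ (j+1) (by omega)
    obtain ⟨hwT, hcase⟩ := h1
    refine ⟨hwT, ?_⟩
    obtain ⟨G, hG⟩ := hph (j+1) (by omega)
    rcases hcase with h | ⟨hsub, h⟩
    · left; rw [h2] at h; simpa using h
    · right; refine ⟨hsub, ?_⟩; rw [h2] at h; simpa using h
  have haccT : ∀ m, ∃ j, m ≤ j ∧ n ≤ j ∧ F j = T := by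
    intro m
    obtain ⟨j, hj1, hj2⟩ := hacc (max m n)
    obtain ⟨S, hS⟩ := hj2
    have hjn : n ≤ j := le_trans (le_max_right m n) hj1
    have := hρ j hjn
    rw [this] at hS
    have h1 := Sum.inr_injective hS
    have h2 := Prod.mk.injEq .. ▸ h1
    exact ⟨j, le_trans (le_max_left m n) hj1, hjn, h2.1 ▸ h2.2⟩
  intro a haT m
  by_contra hno
  push_neg at hno
  have hno' : ∀ j, m ≤ j → w j ≠ a := fun j hj => hno j hj
  obtain ⟨m1, hm1m, hm1n, hFm1⟩ := haccT m
  obtain ⟨m2, hm2m, hm2n, hFm2⟩ := haccT (m1 + 1)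
  -- a stays in F from m1 on, and no reset happens
  have key : ∀ i, m1 ≤ i → a ∈ F i ∧ (∀ i', m1 ≤ i' → i' < i → F (i'+1) = F i' \ {w i'}) := by
    intro i hi
    induction i, hi using Nat.le_induction with
    | base => exact ⟨hFm1 ▸ haT, fun i' h1 h2 => absurd h2 (by omega)⟩
    | succ i hi ih =>
        obtain ⟨haF, hbr⟩ := ih
        have hs := hstep2 i (le_trans hm1n hi)
        rcases hs.2 with h | ⟨hsub, h⟩
        · constructor
          · rw [h]
            refine ⟨haF, ?_⟩
            simp only [Set.mem_singleton_iff]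
            exact fun hc => hno' i (le_trans hm1m hi) (hc ▸ rfl) |>.elim
          · intro i' h1 h2
            rcases Nat.lt_succ_iff_lt_or_eq.mp h2 with h2 | rfl
            · exact hbr i' h1 h2
            · exact h
        · exfalso
          have : a = w i := hsub haF
          exact hno' i (le_trans hm1m hi) (this ▸ rfl)
  -- so F is decreasing from m1+1 to m2, always missing w m1
  have hwm1T : w m1 ∈ T := (hstep2 m1 hm1n).1
  have hdec : ∀ i, m1 + 1 ≤ i → i ≤ m2 → F i ⊆ T \ {w m1} := by
    intro i hi1 hi2
    induction i, hi1 using Nat.le_induction with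
    | base =>
        have := (key m2 (by omega)).2 m1 (le_refl m1) (by omega)
        rw [this, hFm1]
    | succ i hi ih =>
        have hb := (key m2 (by omega)).2 i (by omega) (by omega)
        rw [hb]
        exact le_trans Set.diff_subset (ih (by omega))
  have := hdec m2 (by omega) (le_refl m2)
  rw [hFm2] at this
  exact absurd (this hwm1T).2 (by simp)

lemma BB_step_inr {M : BuchiAutomaton A} (T F : Set A) (a : A) (s' : (BB M).Q) :
    s' ∈ (BB M).step (Sum.inr (T, F)) a ↔
      a ∈ T ∧ (s' = Sum.inr (T, F \ {a}) ∨ (F ⊆ {a} ∧ s' = Sum.inr (T, T))) :=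
  Iff.rfl

lemma BB_step_inl {M : BuchiAutomaton A} (p : M.Q) (a : A) (s' : (BB M).Q) :
    s' ∈ (BB M).step (Sum.inl p) a ↔
      (∃ q ∈ M.step p a, s' = Sum.inl q) ∨
      (∃ T : Set A, p ∈ M.accept ∧ Good M p T ∧ a ∈ T ∧ s' = Sum.inr (T, T)) := by
  revert s'
  show ∀ s' : M.Q ⊕ (Set A × Set A), s' ∈ (Sum.inl '' M.step p a) ∪ _ ↔ _
  intro s'
  rw [Set.mem_union, Set.mem_image]
  constructor
  · rintro (⟨q, hq, rfl⟩ | h)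
    · exact Or.inl ⟨q, hq, rfl⟩
    · exact Or.inr h
  · rintro (⟨q, hq, rfl⟩ | h)
    · exact Or.inl ⟨q, hq, rfl⟩
    · exact Or.inr h

lemma BB_init_iff {M : BuchiAutomaton A} (s : (BB M).Q) :
    s ∈ (BB M).init ↔
      (∃ q ∈ M.init, s = Sum.inl q) ∨
      (∃ (T : Set A) (q0 : M.Q), q0 ∈ M.init ∧ q0 ∈ M.accept ∧ Good M q0 T ∧
        s = Sum.inr (T, T)) := by
  revert s
  show ∀ s : M.Q ⊕ (Set A × Set A), s ∈ (Sum.inl '' M.init) ∪ _ ↔ _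
  intro s
  rw [Set.mem_union, Set.mem_image]
  constructor
  · rintro (⟨q, hq, rfl⟩ | h)
    · exact Or.inl ⟨q, hq, rfl⟩
    · exact Or.inr h
  · rintro (⟨q, hq, rfl⟩ | h)
    · exact Or.inl ⟨q, hq, rfl⟩
    · exact Or.inr h

lemma BB_accept_iff {M : BuchiAutomaton A} (s : (BB M).Q) :
    s ∈ (BB M).accept ↔ ∃ T : Set A, s = Sum.inr (T, T) := Iff.rfl

lemma langBB_subset_jump (M : BuchiAutomaton A) : (BB M).lang ⊆ JumpLang M := by
  rintro w ⟨ρ, ⟨hinit, hstep⟩, hacc⟩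
  have hex : ∃ j, ∃ p : Set A × Set A, ρ j = Sum.inr p := by
    obtain ⟨j, -, hj⟩ := hacc 0
    obtain ⟨T, hT⟩ := hj
    exact ⟨j, (T, T), hT⟩
  set n := Nat.find hex with hn
  obtain ⟨⟨T, F0⟩, hρn⟩ := Nat.find_spec hex
  rw [← hn] at hρn
  have hmin : ∀ j, j < n → ∃ p : M.Q, ρ j = Sum.inl p := by
    intro j hj
    have hne : ¬ ∃ p : Set A × Set A, ρ j = Sum.inr p := Nat.find_min hex hj
    cases hρj : ρ j with
    | inl p => exact ⟨p, rfl⟩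
    | inr p => exact absurd ⟨p, hρj⟩ hne
  have hph : ∀ j, n ≤ j → ∃ F, ρ j = Sum.inr (T, F) := by
    intro j hj
    induction j, hj using Nat.le_induction with
    | base => exact ⟨F0, hρn⟩
    | succ j hj ih =>
        obtain ⟨F, hF⟩ := ih
        have hs := hstep j
        rw [hF, BB_step_inr] at hs
        rcases hs.2 with h | ⟨-, h⟩
        · exact ⟨F \ {w j}, h⟩
        · exact ⟨T, h⟩
  have hlet2 : ∀ j, n ≤ j → w j ∈ T := by
    intro j hj
    obtain ⟨F, hF⟩ := hph j hj
    have hs := hstep j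
    rw [hF, BB_step_inr] at hs
    exact hs.1
  obtain ⟨n₁, q, σ, hqacc, hqgood, hσ0, hσn, hσstep, hlet⟩ :
      ∃ (n₁ : ℕ) (q : M.Q) (σ : ℕ → M.Q), q ∈ M.accept ∧ Good M q T ∧
        σ 0 ∈ M.init ∧ σ n₁ = q ∧ (∀ j, j < n₁ → σ (j+1) ∈ M.step (σ j) (w j)) ∧
        (∀ j, n₁ ≤ j → w j ∈ T) := by
    rcases Nat.eq_zero_or_pos n with hn0 | hn0
    · -- run starts in phase 2
      have h0 : ρ 0 = Sum.inr (T, F0) := by rw [← hn0]; exact hρn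
      rw [BB_init_iff, h0] at hinit
      rcases hinit with ⟨q0, -, hq0⟩ | ⟨T', q0, hq1, hq2, hq3, heq⟩
      · exact absurd hq0 (by simp)
      · have hTT : T' = T := by
          have := heq.symm.trans rfl
          injection heq with h1
          exact (Prod.mk.injEq .. ▸ h1).1.symm
        refine ⟨0, q0, fun _ => q0, hq2, hTT ▸ hq3, hq1, rfl, fun j hj => absurd hj (by omega),
          fun j _ => hlet2 j (by omega)⟩
    · -- jump at step n₁ = n - 1
      set n₁ := n - 1 with hn₁
      have hn₁n : n₁ + 1 = n := by omega
      obtain ⟨p, hp⟩ := hmin n₁ (by omega)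
      have hjump := hstep n₁
      rw [hp] at hjump
      rw [BB_step_inl, show n₁ + 1 = n from hn₁n, hρn] at hjump
      rcases hjump with ⟨q', -, hq'⟩ | ⟨T', hpacc, hpgood, hwT, heq⟩
      · exact absurd hq' (by simp)
      · have hTT : T' = T := by
          injection heq with h1
          exact (Prod.mk.injEq .. ▸ h1).1.symm
        -- extract phase-1 states
        set σ : ℕ → M.Q := fun j => if h : j < n then (hmin j h).choose else p with hσ
        have hσval : ∀ j (h : j < n), ρ j = Sum.inl (σ j) := by
          intro j h
          rw [hσ]
          simp only [dif_pos h]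
          exact (hmin j h).choose_spec
        have hσn₁ : σ n₁ = p := by
          have h1 := hσval n₁ (by omega)
          rw [hp] at h1
          exact (Sum.inl_injective h1).symm
        refine ⟨n₁, p, σ, hpacc, hTT ▸ hpgood, ?_, hσn₁, ?_, ?_⟩
        · have h1 := hσval 0 (by omega)
          rw [BB_init_iff, h1] at hinit
          rcases hinit with ⟨q0, hq0i, hq0e⟩ | ⟨T3, q3, h3a, h3b, h3c, heq3⟩
          · rwa [Sum.inl_injective hq0e]
          · exact absurd heq3 (by simp)
        · intro j hj
          have h1 := hσval j (by omega)
          have h2 := hσval (j+1) (by omega)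
          have hs := hstep j
          rw [h1, BB_step_inl, h2] at hs
          rcases hs with ⟨q2, hq2m, hq2e⟩ | ⟨T2, h2a, h2b, h2c, heq2⟩
          · rwa [Sum.inl_injective hq2e]
          · exact absurd heq2 (by simp)
        · intro j hj
          rcases Nat.lt_or_ge j n with h | h
          · have : j = n₁ := by omega
            rw [this]
            exact hTT ▸ hwT
          · exact hlet2 j h
  -- every letter of T occurs past any point in w
  have hinfT : ∀ a ∈ T, ∀ m, ∃ j, m ≤ j ∧ w j = a := phase2_letters hstep hph hacc
  have wn₁T : w n₁ ∈ T := hlet n₁ (le_refl _)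
  -- the loop word Y
  set l' : A → List A := fun a => if h : a ∈ T then (hqgood a h).choose else [] with hl'
  have hl'spec : ∀ a (ha : a ∈ T), (l' a) ≠ [] ∧ (∀ b ∈ l' a, b ∈ T) ∧ a ∈ l' a ∧
      Steps M q (l' a) q := by
    intro a ha
    rw [hl']
    simp only [dif_pos ha]
    exact (hqgood a ha).choose_spec
  have hl'steps : ∀ a, Steps M q (l' a) q := by
    intro a
    by_cases ha : a ∈ T
    · exact (hl'spec a ha).2.2.2
    · rw [hl']; simp only [dif_neg ha]; rfl
  set Y : List A := Finset.univ.toList.flatMap l' with hY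
  have hYsteps : Steps M q Y q := Steps_flatMap l' _ (fun b _ => hl'steps b)
  have hYT : ∀ b ∈ Y, b ∈ T := by
    intro b hb
    rw [hY, List.mem_flatMap] at hb
    obtain ⟨c, -, hbc⟩ := hb
    by_cases hc : c ∈ T
    · exact (hl'spec c hc).2.1 b hbc
    · rw [hl'] at hbc; simp [dif_neg hc] at hbc
  have hYmem : ∀ a, a ∈ T → a ∈ Y := by
    intro a ha
    rw [hY, List.mem_flatMap]
    exact ⟨a, by simp, (hl'spec a ha).2.2.1⟩
  have hLpos : 0 < Y.length := List.length_pos_iff.mpr (List.ne_nil_of_mem (hYmem _ wn₁T))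
  set L := Y.length with hL
  obtain ⟨σY, hσY0, hσYL, hσYstep⟩ := run_of_steps hYsteps
  -- the witness word and its run
  set gY : ℕ → A := fun i => Y.getD (i % L) (w 0) with hgY
  have hgY_get : ∀ i, gY i = Y.get ⟨i % L, Nat.mod_lt _ hLpos⟩ := by
    intro i
    simp only [hgY]
    rw [List.getD_eq_getElem Y (w 0) (Nat.mod_lt _ hLpos)]
    simp
    rfl
  have hgY_mem : ∀ i, gY i ∈ T := by
    intro i
    rw [hgY_get]
    exact hYT _ (Y.get_mem _)
  have hgY_period : ∀ i m, gY (i + m * L) = gY i := by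
    intro i m
    simp only [hgY]
    congr 1
    exact Nat.add_mul_mod_self_right ..
  set w' : ℕ → A := fun j => if j < n₁ then w j else gY (j - n₁) with hw'
  set ρ' : ℕ → M.Q := fun j => if j < n₁ then σ j else σY ((j - n₁) % L) with hρ'
  have hρ'val_lt : ∀ j, j < n₁ → ρ' j = σ j := by intro j hj; rw [hρ']; simp [hj]
  have hρ'val_ge : ∀ j, n₁ ≤ j → ρ' j = σY ((j - n₁) % L) := by
    intro j hj; rw [hρ']; simp [Nat.not_lt.mpr hj]
  have hw'val_lt : ∀ j, j < n₁ → w' j = w j := by intro j hj; rw [hw']; simp [hj]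
  have hw'val_ge : ∀ j, n₁ ≤ j → w' j = gY (j - n₁) := by
    intro j hj; rw [hw']; simp [Nat.not_lt.mpr hj]
  have hσY0q : σY 0 = q := hσY0
  have hρ'n₁ : ρ' n₁ = q := by
    rw [hρ'val_ge n₁ (le_refl _)]
    simp [hσY0q]
  have hstep' : ∀ j, ρ' (j+1) ∈ M.step (ρ' j) (w' j) := by
    intro j
    rcases Nat.lt_or_ge j n₁ with hj | hj
    · have h1 : ρ' j = σ j := hρ'val_lt j hj
      have h2 : ρ' (j+1) = σ (j+1) := by
        rcases Nat.lt_or_ge (j+1) n₁ with h | h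
        · exact hρ'val_lt _ h
        · have hjn : j + 1 = n₁ := by omega
          rw [hjn, hρ'n₁, ← hσn]
      rw [h1, h2, hw'val_lt j hj]
      exact hσstep j hj
    · set i := (j - n₁) % L with hi
      have hiL : i < L := Nat.mod_lt _ hLpos
      have h1 : ρ' j = σY i := by rw [hρ'val_ge j hj]
      have h3 : w' j = Y.get ⟨i, hiL⟩ := by
        rw [hw'val_ge j hj, hgY_get]
      have h2 : ρ' (j+1) = σY ((i + 1) % L) := by
        rw [hρ'val_ge (j+1) (by omega)]
        have e : j + 1 - n₁ = (j - n₁) + 1 := by omega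
        rw [e, ← Nat.mod_add_mod, ← hi]
      rcases Nat.lt_or_ge (i+1) L with h | h
      · rw [h1, h2, h3, Nat.mod_eq_of_lt h]
        exact hσYstep i hiL
      · have hiL1 : i + 1 = L := by omega
        have hiY : i + 1 = Y.length := hiL1.trans hL
        have e : (i + 1) % L = 0 := by rw [hiL1, Nat.mod_self]
        rw [h1, h2, h3, e, hσY0q]
        have h5 : σY (i + 1) = q := by rw [hiY]; exact hσYL
        rw [← h5]
        exact hσYstep i hiL
  have hrun0 : ρ' 0 ∈ M.init := by
    rcases Nat.eq_zero_or_pos n₁ with h | h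
    · have h0 : ρ' 0 = q := by rw [← h]; exact hρ'n₁
      rw [h0, ← hσn, h]
      exact hσ0
    · rw [hρ'val_lt 0 h]
      exact hσ0
  have hacc' : ∀ m, ∃ j, m ≤ j ∧ ρ' j ∈ M.accept := by
    intro m
    have hmL : m ≤ m * L := Nat.le_mul_of_pos_right m hLpos
    refine ⟨n₁ + m * L, by omega, ?_⟩
    rw [hρ'val_ge _ (by omega)]
    have e : n₁ + m * L - n₁ = m * L := by omega
    rw [e, Nat.mul_mod_left, hσY0q]
    exact hqacc
  -- parikh images agree
  have hparikh : parikhInf w' = parikhInf w := by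
    funext a
    show {j : ℕ | w' j = a}.encard = {j : ℕ | w j = a}.encard
    by_cases ha : a ∈ T
    · have hwinf : {j : ℕ | w j = a}.Infinite := infinite_occ_of_unbdd (hinfT a ha)
      have hw'inf : {j : ℕ | w' j = a}.Infinite := by
        apply infinite_occ_of_unbdd
        intro m
        obtain ⟨⟨ia, hia⟩, hget⟩ := List.mem_iff_get.mp (hYmem a ha)
        have hmL : m ≤ m * L := Nat.le_mul_of_pos_right m hLpos
        refine ⟨n₁ + (ia + m * L), by omega, ?_⟩
        rw [hw'val_ge _ (by omega)]
        have e : n₁ + (ia + m * L) - n₁ = ia + m * L := by omega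
        rw [e, hgY_period, hgY_get]
        have : ia % L = ia := Nat.mod_eq_of_lt hia
        rw [← hget]
        congr 1
        exact Fin.ext this
      rw [Set.encard_eq_top hwinf, Set.encard_eq_top hw'inf]
    · have hseteq : {j : ℕ | w' j = a} = {j : ℕ | w j = a} := by
        ext j
        simp only [Set.mem_setOf_eq]
        rcases Nat.lt_or_ge j n₁ with hj | hj
        · rw [hw'val_lt j hj]
        · constructor
          · intro hc
            rw [hw'val_ge j hj] at hc
            exact absurd (hc ▸ hgY_mem (j - n₁)) ha
          · intro hc
            exact absurd (hc ▸ hlet j hj) ha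
      rw [hseteq]
  exact ⟨w', hparikh, ρ', ⟨hrun0, hstep'⟩, hacc'⟩


/-- Past some point, every letter of `v` is a letter occurring infinitely often. -/
lemma eventually_inf_letters (v : ℕ → A) :
    ∃ N, ∀ j, N ≤ j → v j ∈ {a : A | {i : ℕ | v i = a}.Infinite} := by
  set S : Set ℕ := ⋃ a ∈ {a : A | ¬ {i : ℕ | v i = a}.Infinite}, {i : ℕ | v i = a} with hS
  have hSfin : S.Finite := by
    apply Set.Finite.biUnion (Set.toFinite _)
    intro a ha
    simp only [Set.mem_setOf_eq] at ha
    rwa [Set.not_infinite] at ha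
  obtain ⟨b, hb⟩ := hSfin.bddAbove
  refine ⟨b + 1, ?_⟩
  intro j hj
  by_contra hc
  have hjS : j ∈ S := by
    rw [hS]
    exact Set.mem_biUnion hc rfl
  exact absurd (hb hjS) (by omega)

lemma count_flatMap_replicate (d : A → ℕ) (a : A) :
    ∀ lst : List A, lst.Nodup →
      (lst.flatMap (fun b => List.replicate (d b) b)).count a
        = if a ∈ lst then d a else 0 := by
  intro lst
  induction lst with
  | nil => simp
  | cons b tl ih =>
      intro hnd
      rw [List.flatMap_cons, List.count_append, List.count_replicate,
        ih (List.Nodup.of_cons hnd)]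
      by_cases hab : b = a
      · subst hab
        have : b ∉ tl := (List.nodup_cons.mp hnd).1
        simp [this]
      · simp only [beq_iff_eq, hab, if_false, List.mem_cons]
        have : (a ∈ tl → ¬ a = b) := fun _ => fun h => hab h.symm
        by_cases hatl : a ∈ tl
        · simp [hatl, Ne.symm hab]
        · simp [hatl, Ne.symm hab]

lemma mem_flatMap_replicate_pos {d : A → ℕ} {b : A} {lst : List A}
    (hb : b ∈ lst.flatMap (fun c => List.replicate (d c) c)) : 0 < d b := by
  rw [List.mem_flatMap] at hb
  obtain ⟨c, -, hbc⟩ := hb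
  have := List.eq_of_mem_replicate hbc
  subst this
  rcases Nat.eq_zero_or_pos (d b) with h | h
  · rw [h] at hbc; simp at hbc
  · exact h

lemma jump_subset_EWin (M : BuchiAutomaton A) : JumpLang M ⊆ EWinLang (BB M) := by
  rintro w ⟨w', hpar, ρ', ⟨hinit, hstep⟩, hacc⟩
  set T : Set A := {a : A | {j : ℕ | w j = a}.Infinite} with hT
  have hparT : ∀ a : A, {j : ℕ | w' j = a}.Infinite ↔ a ∈ T := by
    intro a
    have hpa := congrFun hpar a
    constructor
    · intro h
      have h1 : parikhInf w' a = ⊤ := Set.encard_eq_top_iff.mpr h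
      have h2 : parikhInf w a = ⊤ := hpa ▸ h1
      exact Set.encard_eq_top_iff.mp h2
    · intro h
      have h2 : parikhInf w a = ⊤ := Set.encard_eq_top_iff.mpr h
      exact Set.encard_eq_top_iff.mp (hpa.trans h2)
  -- eventually all letters are in T
  obtain ⟨K1, hK1⟩ := eventually_inf_letters w
  obtain ⟨N1, hN1'⟩ := eventually_inf_letters w'
  have hN1 : ∀ j, N1 ≤ j → w' j ∈ T := by
    intro j hj
    exact (hparT (w' j)).mp (hN1' j hj)
  -- a single accepting state visited infinitely often
  have hRinf : {m : ℕ | ρ' m ∈ M.accept}.Infinite := by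
    apply Set.infinite_of_not_bddAbove
    rintro ⟨b, hb⟩
    obtain ⟨m, hm1, hm2⟩ := hacc (b+1)
    exact absurd (hb hm2) (by omega)
  obtain ⟨q, hqacc, hqI⟩ :
      ∃ q : M.Q, q ∈ M.accept ∧ {m : ℕ | ρ' m = q}.Infinite := by
    by_contra hc
    push_neg at hc
    have hfin : ∀ q : {q : M.Q // q ∈ M.accept}, {m : ℕ | ρ' m = q.1}.Finite := by
      intro q
      rcases Set.not_infinite.mp (fun h => h (hc q.1 q.2)) with h
      exact h
    have hsub : {m : ℕ | ρ' m ∈ M.accept} ⊆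
        ⋃ q : {q : M.Q // q ∈ M.accept}, {m : ℕ | ρ' m = q.1} := by
      intro m hm
      exact Set.mem_iUnion.mpr ⟨⟨ρ' m, hm⟩, rfl⟩
    exact hRinf ((Set.finite_iUnion hfin).subset hsub)
  -- fix m0
  obtain ⟨m0, hm0I, hm0N1⟩ := hqI.exists_gt N1
  have hρ'm0 : ρ' m0 = q := hm0I
  -- Good q T
  have hgood : Good M q T := by
    intro a haT
    have hainf : {j : ℕ | w' j = a}.Infinite := (hparT a).mpr haT
    obtain ⟨ma, hmaI, hmaN⟩ := hqI.exists_gt N1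
    obtain ⟨i, hiw, hima⟩ := hainf.exists_gt ma
    obtain ⟨ma', hma'I, hma'i⟩ := hqI.exists_gt i
    refine ⟨List.ofFn (fun t : Fin (ma' - ma) => w' (ma + t)), ?_, ?_, ?_, ?_⟩
    · have : (List.ofFn (fun t : Fin (ma' - ma) => w' (ma + t))).length = ma' - ma := by
        simp
      intro hnil
      rw [hnil] at this
      simp at this
      omega
    · intro b hb
      rw [List.mem_ofFn] at hb
      obtain ⟨t, ht⟩ := hb
      rw [← ht]
      exact hN1 _ (by omega)
    · rw [List.mem_ofFn]
      refine ⟨⟨i - ma, by omega⟩, ?_⟩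
      show w' (ma + (i - ma)) = a
      rw [show ma + (i - ma) = i from by omega]
      exact hiw
    · have := steps_of_run hstep (ma' - ma) ma
      rw [show ma + (ma' - ma) = ma' from by omega] at this
      rw [show ρ' ma = q from hmaI, show ρ' ma' = q from hma'I] at this
      exact this
  -- choose the window size k
  set ka : A → ℕ := fun a =>
    if h : a ∈ T then (exists_cntI_ge (show {j : ℕ | w j = a}.Infinite from h)
      (cntI w' a 0 m0)).choose else 0 with hka
  set k := K1 + m0 + 1 + Finset.univ.sup ka with hk
  have hk1 : 1 ≤ k := by omega
  have hkm0 : m0 < k := by omega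
  have hkK1 : K1 ≤ k := by omega
  have hwT : ∀ j, k ≤ j → w j ∈ T := fun j hj => hK1 j (by omega)
  have hcnt_le : ∀ a : A, cntI w' a 0 m0 ≤ cntI w a 0 k := by
    intro a
    by_cases ha : a ∈ T
    · have hspec := (exists_cntI_ge (show {j : ℕ | w j = a}.Infinite from ha)
        (cntI w' a 0 m0)).choose_spec
      have h1 : ka a ≤ k := by
        have := Finset.le_sup (f := ka) (Finset.mem_univ a)
        omega
      have h2 : ka a = (exists_cntI_ge (show {j : ℕ | w j = a}.Infinite from ha)
          (cntI w' a 0 m0)).choose := by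
        rw [hka]; simp [dif_pos ha]
      calc cntI w' a 0 m0 ≤ cntI w a 0 (ka a) := by rw [h2]; exact hspec
        _ ≤ cntI w a 0 k := cntI_mono w a h1
    · have e1 : {j : ℕ | w' j = a}.encard = (cntI w' a 0 m0 : ℕ∞) := by
        apply encard_occ_of_bdd
        intro j hj hja
        exact ha (hja ▸ hN1 j (by omega))
      have e2 : {j : ℕ | w j = a}.encard = (cntI w a 0 k : ℕ∞) := by
        apply encard_occ_of_bdd
        intro j hj hja
        exact ha (hja ▸ hwT j hj)
      have := congrFun hpar a
      rw [show parikhInf w' a = {j : ℕ | w' j = a}.encard from rfl,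
        show parikhInf w a = {j : ℕ | w j = a}.encard from rfl, e1, e2] at this
      exact le_of_eq (Nat.cast_inj.mp this)
  set d : A → ℕ := fun a => cntI w a 0 k - cntI w' a 0 m0 with hd
  have hdval : ∀ a, cntI w' a 0 m0 + d a = cntI w a 0 k := by
    intro a
    have := hcnt_le a
    simp only [hd]
    omega
  have hd0 : ∀ a, a ∉ T → d a = 0 := by
    intro a ha
    have e1 : {j : ℕ | w' j = a}.encard = (cntI w' a 0 m0 : ℕ∞) := by
      apply encard_occ_of_bdd
      intro j hj hja
      exact ha (hja ▸ hN1 j (by omega))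
    have e2 : {j : ℕ | w j = a}.encard = (cntI w a 0 k : ℕ∞) := by
      apply encard_occ_of_bdd
      intro j hj hja
      exact ha (hja ▸ hwT j hj)
    have := congrFun hpar a
    rw [show parikhInf w' a = {j : ℕ | w' j = a}.encard from rfl,
      show parikhInf w a = {j : ℕ | w j = a}.encard from rfl, e1, e2] at this
    have h2 := Nat.cast_inj.mp this
    simp only [hd]
    omega
  set L : List A := Finset.univ.toList.flatMap (fun a => List.replicate (d a) a) with hL
  have hLlen : L.length = ∑ a : A, d a := by
    rw [hL, List.length_flatMap]
    have : (List.map (List.length ∘ fun a => List.replicate (d a) a) Finset.univ.toList)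
        = List.map d Finset.univ.toList := by
      apply List.map_congr_left
      intro a _
      simp
    rw [show (List.map (fun a => (List.replicate (d a) a).length) Finset.univ.toList) = _ from this,
      Finset.sum_map_toList]
  have hdsum : m0 + L.length = k := by
    have h1 : (∑ a : A, cntI w a 0 k) = k := sum_cntI w k
    have h2 : (∑ a : A, cntI w' a 0 m0) = m0 := sum_cntI w' m0
    have h3 : (∑ a : A, (cntI w' a 0 m0 + d a)) = ∑ a : A, cntI w a 0 k :=
      Finset.sum_congr rfl (fun a _ => hdval a)
    rw [Finset.sum_add_distrib, h2] at h3
    rw [hLlen]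
    omega
  have hLcount : ∀ a, L.count a = d a := by
    intro a
    rw [hL, count_flatMap_replicate d a Finset.univ.toList (Finset.univ.nodup_toList)]
    simp
  have hLT : ∀ b ∈ L, b ∈ T := by
    intro b hb
    have := mem_flatMap_replicate_pos (hL ▸ hb)
    by_contra hc
    rw [hd0 b hc] at this
    omega
  -- the witness word
  set w'' : ℕ → A := fun j =>
    if j < m0 then w' j else if j < k then L.getD (j - m0) (w 0) else w j with hw''
  have hw''lt : ∀ j, j < m0 → w'' j = w' j := by
    intro j hj; rw [hw'']; simp [hj]
  have hw''mid : ∀ j, m0 ≤ j → j < k → w'' j = L.getD (j - m0) (w 0) := by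
    intro j hj1 hj2; rw [hw'']; simp [Nat.not_lt.mpr hj1, hj2]
  have hw''ge : ∀ j, k ≤ j → w'' j = w j := by
    intro j hj; rw [hw'']; simp [Nat.not_lt.mpr (by omega : m0 ≤ j), Nat.not_lt.mpr hj]
  have hw''T : ∀ j, m0 ≤ j → w'' j ∈ T := by
    intro j hj
    rcases Nat.lt_or_ge j k with h | h
    · rw [hw''mid j hj h]
      have hlen : j - m0 < L.length := by omega
      rw [List.getD_eq_getElem L (w 0) hlen]
      exact hLT _ (List.getElem_mem hlen)
    · rw [hw''ge j h]
      exact hwT j h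
  -- windows agree
  have hkperm : KWinPerm k w'' w := by
    intro i a
    rw [winCount_eq_cntI, winCount_eq_cntI]
    rcases Nat.eq_zero_or_pos i with hi | hi
    · subst hi
      rw [Nat.mul_zero, Nat.zero_add]
      have hsplit : cntI w'' a 0 k = cntI w'' a 0 m0 + cntI w'' a m0 k :=
        cntI_split w'' a (Nat.zero_le m0) (by omega)
      have hc1 : cntI w'' a 0 m0 = cntI w' a 0 m0 :=
        cntI_congr a (fun j _ hj => hw''lt j hj)
      have hc2 : cntI w'' a m0 k = L.count a := by
        have := cntI_of_list w'' a (w 0) L m0 (fun t ht => by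
          rw [hw''mid (m0 + t) (by omega) (by omega)]
          congr 1
          omega)
        rw [hdsum] at this
        exact this
      rw [hsplit, hc1, hc2, hLcount]
      exact hdval a
    · apply cntI_congr
      intro j hj1 hj2
      have : k ≤ j := by
        have : k * 1 ≤ k * i := Nat.mul_le_mul_left k hi
        omega
      exact hw''ge j this
  -- the accepting run of BB M on w''
  set G : ℕ → Set A := fun t =>
    Nat.rec T (fun t' F => if F ⊆ {w'' (m0 + 1 + t')} then T else F \ {w'' (m0 + 1 + t')}) t
    with hG
  have hG0 : G 0 = T := rfl
  have hGsucc : ∀ t, G (t+1) =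
      if G t ⊆ {w'' (m0 + 1 + t)} then T else G t \ {w'' (m0 + 1 + t)} := fun t => rfl
  have hGsubT : ∀ t, G t ⊆ T := by
    intro t
    induction t with
    | zero => rw [hG0]
    | succ t ih =>
        rw [hGsucc t]
        by_cases h : G t ⊆ {w'' (m0 + 1 + t)}
        · rw [if_pos h]
        · rw [if_neg h]
          exact (Set.diff_subset).trans ih
  have hTne : (T : Set A).Nonempty := ⟨w'' m0, hw''T m0 (le_refl m0)⟩
  have hGne : ∀ t, (G t).Nonempty := by
    intro t
    induction t with
    | zero => rw [hG0]; exact hTne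
    | succ t ih =>
        rw [hGsucc t]
        by_cases h : G t ⊆ {w'' (m0 + 1 + t)}
        · rw [if_pos h]; exact hTne
        · rw [if_neg h]
          obtain ⟨y, hy1, hy2⟩ := Set.not_subset.mp h
          exact ⟨y, hy1, hy2⟩
  have hreset : ∀ t, ∃ t', t ≤ t' ∧ G t' = T := by
    intro t
    by_contra hc
    push_neg at hc
    have hnores : ∀ t', t ≤ t' → ¬ (G t' ⊆ {w'' (m0 + 1 + t')}) := by
      intro t' ht' hsub
      have : G (t'+1) = T := by rw [hGsucc t', if_pos hsub]
      exact hc (t'+1) (by omega) this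
    have hstepG : ∀ t', t ≤ t' → G (t'+1) = G t' \ {w'' (m0 + 1 + t')} := by
      intro t' ht'
      rw [hGsucc t', if_neg (hnores t' ht')]
    have hdec : ∀ t1 t2, t ≤ t1 → t1 ≤ t2 → G t2 ⊆ G t1 := by
      intro t1 t2 ht1 ht12
      induction t2, ht12 using Nat.le_induction with
      | base => exact le_refl _
      | succ t2 ht2 ih =>
          rw [hstepG t2 (by omega)]
          exact Set.diff_subset.trans ih
    -- ncard stabilizes
    have hex : ∃ c : ℕ, ∃ t', t ≤ t' ∧ (G t').ncard = c := ⟨(G t).ncard, t, le_refl t, rfl⟩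
    obtain ⟨t0, ht0, ht0c⟩ := Nat.find_spec hex
    have hstab : ∀ t', t0 ≤ t' → G t' = G t0 := by
      intro t' ht'
      apply Set.eq_of_subset_of_ncard_le (hdec t0 t' ht0 ht') _ (Set.toFinite _)
      rw [ht0c]
      exact Nat.find_le ⟨t', by omega, rfl⟩
    obtain ⟨a, haG⟩ := hGne t0
    have haT : a ∈ T := hGsubT t0 haG
    have hainf : {j : ℕ | w j = a}.Infinite := haT
    obtain ⟨p, hpw, hpgt⟩ := hainf.exists_gt (max k (m0 + 1 + t0))
    set t' := p - (m0 + 1) with ht'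
    have ht't0 : t0 ≤ t' := by omega
    have hpt' : m0 + 1 + t' = p := by omega
    have hstep' := hstepG t' (by omega)
    have hGt' : G t' = G t0 := hstab t' ht't0
    have hGt'1 : G (t'+1) = G t0 := hstab (t'+1) (by omega)
    have hw''p : w'' (m0 + 1 + t') = a := by
      rw [hpt', hw''ge p (by omega)]
      exact hpw
    rw [hGt', hw''p, hGt'1] at hstep'
    have : a ∈ G t0 \ {a} := hstep' ▸ haG
    exact this.2 rfl
  -- the run
  set ρ'' : ℕ → (BB M).Q := fun j =>
    if j ≤ m0 then Sum.inl (ρ' j) else Sum.inr (T, G (j - (m0 + 1))) with hρ''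
  have hρ''le : ∀ j, j ≤ m0 → ρ'' j = Sum.inl (ρ' j) := by
    intro j hj; rw [hρ'']; simp [hj]
    rfl
  have hρ''gt : ∀ j, m0 < j → ρ'' j = Sum.inr (T, G (j - (m0 + 1))) := by
    intro j hj; rw [hρ'']; simp [Nat.not_le.mpr hj]
    rfl
  have hrun0 : ρ'' 0 ∈ (BB M).init := by
    rw [BB_init_iff, hρ''le 0 (Nat.zero_le m0)]
    exact Or.inl ⟨ρ' 0, hinit, rfl⟩
  have hstep'' : ∀ j, ρ'' (j+1) ∈ (BB M).step (ρ'' j) (w'' j) := by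
    intro j
    rcases Nat.lt_trichotomy j m0 with hj | hj | hj
    · rw [hρ''le j (by omega), BB_step_inl, hρ''le (j+1) (by omega)]
      exact Or.inl ⟨ρ' (j+1), by rw [hw''lt j hj]; exact hstep j, rfl⟩
    · subst hj
      rw [hρ''le j (le_refl j), hρ'm0, BB_step_inl, hρ''gt (j+1) (by omega)]
      refine Or.inr ⟨T, hqacc, hgood, hw''T j (le_refl j), ?_⟩
      rw [show j + 1 - (j + 1) = 0 from by omega, hG0]
    · rw [hρ''gt j hj, BB_step_inr, hρ''gt (j+1) (by omega)]
      refine ⟨hw''T j (by omega), ?_⟩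
      set t := j - (m0 + 1) with htdef
      have hjt : m0 + 1 + t = j := by omega
      have hj1t : j + 1 - (m0 + 1) = t + 1 := by omega
      rw [hj1t, hGsucc t, hjt]
      by_cases h : G t ⊆ {w'' j}
      · rw [if_pos h]
        exact Or.inr ⟨h, rfl⟩
      · rw [if_neg h]
        exact Or.inl rfl
  have hacc'' : ∀ m, ∃ j, m ≤ j ∧ ρ'' j ∈ (BB M).accept := by
    intro m
    obtain ⟨t', ht'1, ht'2⟩ := hreset m
    refine ⟨m0 + 1 + t', by omega, ?_⟩
    rw [hρ''gt (m0 + 1 + t') (by omega), show m0 + 1 + t' - (m0 + 1) = t' from by omega, ht'2]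
    exact ⟨T, rfl⟩
  exact ⟨k, hk1, w'', hkperm, ρ'', ⟨hrun0, hstep''⟩, hacc''⟩

end JWork

/-- Every jumping language of a Büchi automaton is the `∃`-window jumping
language of some Büchi automaton. -/
theorem jumpLang_is_eWinLang (A : Type) [Fintype A] (M : BuchiAutomaton A) :
    ∃ B : BuchiAutomaton A, EWinLang B = JumpLang M := by
  refine ⟨JWork.BB M, ?_⟩
  apply Set.Subset.antisymm
  · rintro w ⟨k, hk, w1, hperm, hw1⟩
    obtain ⟨w2, hp2, hw2⟩ := JWork.langBB_subset_jump M hw1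
    exact ⟨w2, hp2.trans (JWork.kwin_parikh hk hperm), hw2⟩
  · exact fun w hw => JWork.jump_subset_EWin M hw
end

section
/- Let ∪_m (S_m + m) and ∪_m (T_m + m) be oblivious masked unions over a finite alphabet Σ, i.e., for every mask m the sets S_m, T_m ⊆ ℕ^Σ are m-oblivious. Then (∪_m (S_m + m)) ∩ (∪_m (T_m + m)) = ∪_m ((S_m ∩ T_m) + m), where each union ranges over all masks m of Σ. -/
open scoped Classical

/-- Intersection of oblivious masked unions is obtained by intersecting
componentwise, mask by mask. -/
theorem oblivious_masked_inter (A : Type) [Fintype A]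
    (S T : (A → ℕ∞) → Set (A → ℕ))
    (hS : ∀ m, IsMask m → MOblivious m (S m)) (hT : ∀ m, IsMask m → MOblivious m (T m)) :
    (⋃ m ∈ {m' : A → ℕ∞ | IsMask m'}, maskAddSet (S m) m) ∩
        (⋃ m ∈ {m' : A → ℕ∞ | IsMask m'}, maskAddSet (T m) m) =
      ⋃ m ∈ {m' : A → ℕ∞ | IsMask m'}, maskAddSet (S m ∩ T m) m := by
  ext v
  simp only [Set.mem_inter_iff, Set.mem_iUnion, Set.mem_setOf_eq]
  constructor
  · rintro ⟨⟨m, hm, x, hxS, hx⟩, ⟨m', hm', y, hyT, hy⟩⟩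
    change maskAdd x m = v at hx
    change maskAdd y m' = v at hy
    -- masks agree
    have hmm : m = m' := by
      funext a
      rcases hm.1 a with h0 | h1
      · rcases hm'.1 a with h0' | h1'
        · rw [h0, h0']
        · exfalso
          have : maskAdd x m a = maskAdd y m' a := by rw [hx, hy]
          simp [maskAdd, h0, h1'] at this
      · rcases hm'.1 a with h0' | h1'
        · exfalso
          have : maskAdd x m a = maskAdd y m' a := by rw [hx, hy]
          simp [maskAdd, h1, h0'] at this
        · rw [h1, h1']
    subst hmm
    have hequiv : maskAdd x m = maskAdd y m := by rw [hx, hy]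
    have hxT : x ∈ T m := (hT m hm x y hequiv).mpr hyT
    exact ⟨m, hm, x, ⟨hxS, hxT⟩, hx⟩
  · rintro ⟨m, hm, x, ⟨hxS, hxT⟩, hx⟩
    exact ⟨⟨m, hm, x, hxS, hx⟩, ⟨m, hm, x, hxT, hx⟩⟩
end
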